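/- arXiv:2003.11460 — 4 statements merged into one kernel-verified Lean document; each statement's English description precedes it below -/
import Mathlib

section
/- For every r ∈ [0,1) and every θ ∈ [0,π), the integral J(θ) = ∫₀^θ (1-r²)³/(1+r²-2r·cos φ)² dφ equals 2r(1-r²)·sin θ/(1+r²-2r·cos θ) + 2(1+r²)·arctan((1+r)·tan(θ/2)/(1-r)). Moreover ∫₀^π (1-r²)³/(1+r²-2r·cos φ)² dφ = π(1+r²). -/
open Real

lemma Dpos (r θ : ℝ) (hr : |r| < 1) : 0 < 1 + r^2 - 2*r*Real.cos θ := by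
  obtain ⟨h1, h2⟩ := abs_lt.mp hr
  rcases le_or_gt 0 r with h | h
  · nlinarith [Real.cos_le_one θ, mul_nonneg h (sub_nonneg.2 (Real.cos_le_one θ)), sq_nonneg (1-r)]
  · nlinarith [Real.neg_one_le_cos θ, mul_nonneg (neg_nonneg.2 h.le) (sub_nonneg.2 (neg_le.mp (Real.neg_one_le_cos θ))), sq_nonneg (1+r)]

lemma deriv_key (r θ : ℝ) (hr : |r| < 1) (hθ : θ ∈ Set.Ioo (-Real.pi) Real.pi) :
    HasDerivAt (fun t => 2*r*(1-r^2)*Real.sin t/(1+r^2-2*r*Real.cos t)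
        + 2*(1+r^2)*Real.arctan ((1+r)*Real.tan (t/2)/(1-r)))
      ((1 - r^2)^3 / (1 + r^2 - 2*r*Real.cos θ)^2) θ := by
  obtain ⟨hrl, hru⟩ := abs_lt.mp hr
  have hr1 : (1:ℝ) - r ≠ 0 := by linarith
  have hD : 1 + r^2 - 2*r*Real.cos θ ≠ 0 := (Dpos r θ hr).ne'
  have hc : Real.cos (θ/2) ≠ 0 := by
    have : θ/2 ∈ Set.Ioo (-(Real.pi/2)) (Real.pi/2) := by
      constructor <;> [linarith [hθ.1]; linarith [hθ.2]]
    exact (Real.cos_pos_of_mem_Ioo this).ne'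
  have ht : HasDerivAt (fun t : ℝ => Real.tan (t/2)) (1/Real.cos (θ/2)^2 * (1/2)) θ := by
    have h2 : HasDerivAt (fun t : ℝ => t/2) (1/2) θ := by
      simpa using (hasDerivAt_id θ).div_const 2
    exact (Real.hasDerivAt_tan hc).comp θ h2
  have harg : HasDerivAt (fun t : ℝ => (1+r)*Real.tan (t/2)/(1-r))
      ((1+r)*(1/Real.cos (θ/2)^2 * (1/2))/(1-r)) θ := (ht.const_mul (1+r)).div_const (1-r)
  set u := (1+r)*Real.tan (θ/2)/(1-r) with hu
  have harctan : HasDerivAt (fun t : ℝ => Real.arctan ((1+r)*Real.tan (t/2)/(1-r)))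
      (1/(1+u^2) * ((1+r)*(1/Real.cos (θ/2)^2 * (1/2))/(1-r))) θ :=
    harg.arctan
  have hnum : HasDerivAt (fun t : ℝ => 2*r*(1-r^2)*Real.sin t) (2*r*(1-r^2)*Real.cos θ) θ :=
    (Real.hasDerivAt_sin θ).const_mul (2*r*(1-r^2))
  have hden : HasDerivAt (fun t : ℝ => 1+r^2-2*r*Real.cos t) (2*r*Real.sin θ) θ := by
    have := ((Real.hasDerivAt_cos θ).const_mul (2*r)).const_sub (1+r^2)
    exact this.congr_deriv (by ring)
  have total := (hnum.div hden hD).add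
    ((harctan.const_mul (2*(1+r^2))))
  refine total.congr_deriv ?_
  -- derivative algebra
  have hcos : Real.cos θ = 2*Real.cos (θ/2)^2 - 1 := by
    have := Real.cos_two_mul (θ/2); rw [show 2*(θ/2) = θ by ring] at this; linarith
  have hsq : Real.sin (θ/2)^2 = 1 - Real.cos (θ/2)^2 := by
    have := Real.sin_sq_add_cos_sq (θ/2); linarith
  have hsq2 : Real.sin θ^2 = 1 - Real.cos θ^2 := by
    have := Real.sin_sq_add_cos_sq θ; linarith
  have htan : Real.tan (θ/2) = Real.sin (θ/2)/Real.cos (θ/2) := Real.tan_eq_sin_div_cos _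
  set s := Real.sin (θ/2)
  set c := Real.cos (θ/2)
  have hDsplit : 1 + r^2 - 2*r*Real.cos θ = (1-r)^2*c^2 + (1+r)^2*s^2 := by
    linear_combination (-(1+r)^2)*hsq - 2*r*hcos
  have hD2 : (1-r)^2*c^2 + (1+r)^2*s^2 ≠ 0 := hDsplit ▸ hD
  have hB : 1/(1+u^2) * ((1+r)*(1/c^2 * (1/2))/(1-r))
      = (1-r^2)/(2*(1+r^2-2*r*Real.cos θ)) := by
    rw [hu, htan, hDsplit]
    field_simp
    ring_nf
  rw [hB]
  rw [show 2*r*(1-r^2)*Real.sin θ*(2*r*Real.sin θ) = 4*r^2*(1-r^2)*Real.sin θ^2 by ring, hsq2]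
  have h2D : 2*(1+r^2-2*r*Real.cos θ) ≠ 0 := by
    simpa using hD
  field_simp
  ring

lemma cont_int (r : ℝ) (hr : |r| < 1) :
    Continuous (fun φ => (1 - r^2)^3 / (1 + r^2 - 2*r*Real.cos φ)^2) := by
  apply Continuous.div continuous_const
  · fun_prop
  · intro x
    exact pow_ne_zero 2 (Dpos r x hr).ne'

lemma J_formula (r : ℝ) (hr : |r| < 1) (θ : ℝ) (h1 : 0 ≤ θ) (h2 : θ < Real.pi) :
    (∫ φ in (0:ℝ)..θ, (1 - r^2)^3 / (1 + r^2 - 2*r*Real.cos φ)^2)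
      = 2*r*(1 - r^2)*Real.sin θ / (1 + r^2 - 2*r*Real.cos θ)
        + 2*(1 + r^2) * Real.arctan ((1 + r) * Real.tan (θ/2) / (1 - r)) := by
  have hFTC := intervalIntegral.integral_eq_sub_of_hasDerivAt (a := 0) (b := θ)
    (f := fun t => 2*r*(1-r^2)*Real.sin t/(1+r^2-2*r*Real.cos t)
        + 2*(1+r^2)*Real.arctan ((1+r)*Real.tan (t/2)/(1-r)))
    (f' := fun φ => (1 - r^2)^3 / (1 + r^2 - 2*r*Real.cos φ)^2)
    (fun x hx => by
      rw [Set.uIcc_of_le h1] at hx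
      exact deriv_key r x hr ⟨by nlinarith [Real.pi_pos, hx.1], lt_of_le_of_lt hx.2 h2⟩)
    ((cont_int r hr).intervalIntegrable 0 θ)
  rw [hFTC]
  norm_num

theorem stmt0 (r : ℝ) (hr : r ∈ Set.Ico (0:ℝ) 1) :
    (∀ θ ∈ Set.Ico (0:ℝ) Real.pi,
      (∫ φ in (0:ℝ)..θ, (1 - r^2)^3 / (1 + r^2 - 2*r*Real.cos φ)^2)
        = 2*r*(1 - r^2)*Real.sin θ / (1 + r^2 - 2*r*Real.cos θ)
          + 2*(1 + r^2) * Real.arctan ((1 + r) * Real.tan (θ/2) / (1 - r)))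
    ∧ (∫ φ in (0:ℝ)..Real.pi, (1 - r^2)^3 / (1 + r^2 - 2*r*Real.cos φ)^2)
        = Real.pi * (1 + r^2) := by
  obtain ⟨hr0, hr1⟩ := hr
  have habs : |r| < 1 := by rw [abs_of_nonneg hr0]; exact hr1
  constructor
  · intro θ hθ
    exact J_formula r habs θ hθ.1 hθ.2
  · have habs' : |(-r)| < 1 := by rwa [abs_neg]
    have hsplit : (∫ φ in (0:ℝ)..Real.pi, (1 - r^2)^3 / (1 + r^2 - 2*r*Real.cos φ)^2)
        = (∫ φ in (0:ℝ)..(Real.pi/2), (1 - r^2)^3 / (1 + r^2 - 2*r*Real.cos φ)^2)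
          + (∫ φ in (Real.pi/2)..Real.pi, (1 - r^2)^3 / (1 + r^2 - 2*r*Real.cos φ)^2) :=
      (intervalIntegral.integral_add_adjacent_intervals
        ((cont_int r habs).intervalIntegrable _ _)
        ((cont_int r habs).intervalIntegrable _ _)).symm
    have hrefl : (∫ φ in (Real.pi/2)..Real.pi, (1 - r^2)^3 / (1 + r^2 - 2*r*Real.cos φ)^2)
        = ∫ φ in (0:ℝ)..(Real.pi/2), (1 - (-r)^2)^3 / (1 + (-r)^2 - 2*(-r)*Real.cos φ)^2 := by
      have := intervalIntegral.integral_comp_sub_left (a := (0:ℝ)) (b := Real.pi/2)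
        (fun φ => (1 - r^2)^3 / (1 + r^2 - 2*r*Real.cos φ)^2) Real.pi
      rw [sub_zero, show Real.pi - Real.pi/2 = Real.pi/2 by ring] at this
      rw [← this]
      congr 1
      ext x
      rw [Real.cos_pi_sub]
      ring_nf
    have e1 := J_formula r habs (Real.pi/2) (by positivity) (by linarith [Real.pi_pos])
    have e2 := J_formula (-r) habs' (Real.pi/2) (by positivity) (by linarith [Real.pi_pos])
    rw [hsplit, hrefl, e1, e2]
    rw [show (Real.pi/2)/2 = Real.pi/4 by ring, Real.tan_pi_div_four,
      Real.sin_pi_div_two, Real.cos_pi_div_two]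
    have ha : (0:ℝ) < (1+r)/(1-r) := by
      apply div_pos <;> linarith
    have harc : Real.arctan ((1-r)/(1+r)) = Real.pi/2 - Real.arctan ((1+r)/(1-r)) := by
      rw [show (1-r)/(1+r) = ((1+r)/(1-r))⁻¹ by rw [inv_div]]
      exact Real.arctan_inv_of_pos ha
    rw [show (1+r)*1/(1-r) = (1+r)/(1-r) by ring,
        show (1+(-r))*1/(1-(-r)) = (1-r)/(1+r) by ring, harc]
    have hd : 1 + r^2 - 2*r*0 ≠ 0 := by nlinarith
    have hd' : 1 + r^2 ≠ 0 := by positivity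
    field_simp
    have hinv : (1 + r^2)⁻¹ * (1 + r^2) = 1 := inv_mul_cancel₀ hd'
    linear_combination (2*r*(r^2-1)) * hinv
end

section
/- Let u : 𝔻 → ℂ be given by u(z) = (1/2π)∫₀^{2π} K₂(z·e^{-iθ})·u*(e^{iθ}) dθ for some measurable u* : 𝕋 → ℂ with |u*(e^{iθ})| ≤ 1 for all θ (this is the Poisson-type representation of a T₂-harmonic map of 𝔻 into the closed unit disk). Then for all z ∈ 𝔻, |u(z) - ((1-|z|²)³/(1+|z|²)²)·u(0)| ≤ (2/π)·[(1+|z|²)·arctan|z| + |z|(1-|z|²)/(1+|z|²)]. -/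
open Real MeasureTheory

/-- The kernel `K₂(z) = (1/2)·(1-|z|²)³/|1-z|⁴`. -/
noncomputable def K2ker (z : ℂ) : ℝ :=
  (1 - ‖z‖ ^ 2) ^ 3 / (2 * ‖1 - z‖ ^ 4)

/-- The harmonic Poisson kernel `P(z) = (1-|z|²)/|1-z|²`. -/
noncomputable def Pker (z : ℂ) : ℝ :=
  (1 - ‖z‖ ^ 2) / ‖1 - z‖ ^ 2

/-- The biharmonic Green function `G(z,w)`. -/
noncomputable def Gker (z w : ℂ) : ℝ :=
  ‖z - w‖ ^ 2 *
      Real.log (‖(1 - z * (starRingEnd ℂ) w) / (z - w)‖ ^ 2)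
    - (1 - ‖z‖ ^ 2) * (1 - ‖w‖ ^ 2)

/-- Poisson integral `P[φ](z)`. -/
noncomputable def Pint (φ : ℂ → ℂ) (z : ℂ) : ℂ :=
  (1 / (2 * Real.pi)) *
    ∫ θ in (0:ℝ)..(2 * Real.pi),
      (Pker (z * Complex.exp (-(θ:ℂ) * Complex.I)) : ℂ) * φ (Complex.exp ((θ:ℂ) * Complex.I))

/-- The integral operator `K₂[φ](z)`. -/
noncomputable def K2int (φ : ℂ → ℂ) (z : ℂ) : ℂ :=
  (1 / (2 * Real.pi)) *
    ∫ θ in (0:ℝ)..(2 * Real.pi),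
      (K2ker (z * Complex.exp (-(θ:ℂ) * Complex.I)) : ℂ) * φ (Complex.exp ((θ:ℂ) * Complex.I))

/-- The Green potential `G[g](z) = (1/16)∫_𝔻 G(z,w) g(w) dA(w)`. -/
noncomputable def Gint (g : ℂ → ℂ) (z : ℂ) : ℂ :=
  (1 / 16) * ∫ w in Metric.ball (0:ℂ) 1, (Gker z w : ℂ) * g w

/-- Wirtinger derivative `f_z = (1/2)(f_x - i f_y)`. -/
noncomputable def wderivZ (f : ℂ → ℂ) (z : ℂ) : ℂ :=
  (1 / 2) * (fderiv ℝ f z 1 - Complex.I * fderiv ℝ f z Complex.I)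

/-- Wirtinger derivative `f_{z̄} = (1/2)(f_x + i f_y)`. -/
noncomputable def wderivZbar (f : ℂ → ℂ) (z : ℂ) : ℂ :=
  (1 / 2) * (fderiv ℝ f z 1 + Complex.I * fderiv ℝ f z Complex.I)

/-- Sup norm over the unit circle. -/
noncomputable def normInfCircle (f : ℂ → ℂ) : ℝ :=
  sSup ((fun ζ => ‖f ζ‖) '' {ζ : ℂ | ‖ζ‖ = 1})

/-- Sup norm over the unit disk. -/
noncomputable def normInfDisk (g : ℂ → ℂ) : ℝ :=
  sSup ((fun ζ => ‖g ζ‖) '' Metric.ball (0:ℂ) 1)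

/-- The explicit solution `Φ` of the inhomogeneous biharmonic Dirichlet problem. -/
noncomputable def solPhi (f h g : ℂ → ℂ) (z : ℂ) : ℂ :=
  (((1 - ‖z‖ ^ 2) / 2 : ℝ) : ℂ) * Pint (fun ζ => f ζ + h ζ) z
    + K2int f z - Gint g z

noncomputable def kk (r θ : ℝ) : ℝ :=
  (1 - r^2)^3 / (2 * (1 - 2*r*Real.cos θ + r^2)^2)

lemma d_pos {r : ℝ} (hr : |r| < 1) (θ : ℝ) : 0 < 1 - 2*r*Real.cos θ + r^2 := by
  have h3 : r * Real.cos θ ≤ |r| := by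
    calc r * Real.cos θ ≤ |r * Real.cos θ| := le_abs_self _
    _ = |r| * |Real.cos θ| := abs_mul _ _
    _ ≤ |r| * 1 := by
        exact mul_le_mul_of_nonneg_left (abs_le.mpr ⟨Real.neg_one_le_cos θ, Real.cos_le_one θ⟩) (abs_nonneg r)
    _ = |r| := mul_one _
  have h4 : |r|^2 = r^2 := sq_abs r
  nlinarith [sq_nonneg (1 - |r|)]


lemma abs_one_sub_exp (r s : ℝ) :
    ‖1 - (r:ℂ) * Complex.exp ((s:ℂ) * Complex.I)‖ ^ 2 = 1 - 2*r*Real.cos s + r^2 := by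
  rw [← Complex.normSq_eq_norm_sq, Complex.normSq_apply]
  simp [Complex.exp_mul_I, Complex.cos_ofReal_re, Complex.sin_ofReal_re]
  ring_nf
  nlinarith [Real.sin_sq_add_cos_sq s]

lemma K2ker_eq (r s : ℝ) :
    K2ker ((r:ℂ) * Complex.exp ((s:ℂ) * Complex.I)) = kk r s := by
  unfold K2ker kk
  have h4 : ‖1 - (r:ℂ) * Complex.exp ((s:ℂ) * Complex.I)‖ ^ 4
      = (1 - 2*r*Real.cos s + r^2)^2 := by
    rw [show (4:ℕ) = 2*2 by rfl, pow_mul, abs_one_sub_exp]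
  rw [h4]
  have : ‖(r:ℂ) * Complex.exp ((s:ℂ) * Complex.I)‖ = |r| := by
    simp [Complex.norm_exp]
  rw [this, sq_abs]

lemma kk_cont {r : ℝ} (hr : |r| < 1) : Continuous (kk r) := by
  apply Continuous.div continuous_const
  · fun_prop
  · intro θ
    have := d_pos hr θ
    positivity

set_option maxHeartbeats 1000000 in
lemma hasDerivAt_F {r : ℝ} (hr : |r| < 1) {θ : ℝ} (hθ : θ ∈ Set.uIcc 0 (π/2)) :
    HasDerivAt (fun t => (1+r^2) * arctan (((1+r)/(1-r)) * Real.tan (t/2))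
        + (r*(1-r^2)) * (Real.sin t / (1 - 2*r*Real.cos t + r^2)))
      (kk r θ) θ := by
  obtain ⟨ha, hb⟩ := abs_lt.mp hr
  rw [Set.uIcc_of_le (by positivity)] at hθ
  obtain ⟨h0, h1⟩ := hθ
  have hccos : 0 < Real.cos (θ/2) := by
    apply Real.cos_pos_of_mem_Ioo
    constructor
    · linarith [Real.pi_pos]
    · linarith [Real.pi_pos]
  have hCnn : 0 ≤ Real.cos θ := Real.cos_nonneg_of_mem_Icc ⟨by linarith [Real.pi_pos], h1⟩
  have hd := d_pos hr θ
  set d := 1 - 2*r*Real.cos θ + r^2 with hdef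
  have h2 : HasDerivAt (fun t : ℝ => t/2) (1/2 : ℝ) θ := by
    simpa using (hasDerivAt_id θ).div_const 2
  have htan : HasDerivAt (fun t : ℝ => Real.tan (t/2)) (1 / Real.cos (θ/2)^2 * (1/2)) θ :=
    by have := (Real.hasDerivAt_tan hccos.ne').comp θ h2; exact this
  have hpt := htan.const_mul ((1+r)/(1-r))
  have harc : HasDerivAt (fun t : ℝ => arctan (((1+r)/(1-r)) * Real.tan (t/2)))
      ((1 / (1 + (((1+r)/(1-r)) * Real.tan (θ/2))^2)) * (((1+r)/(1-r)) * (1 / Real.cos (θ/2)^2 * (1/2)))) θ :=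
    (Real.hasDerivAt_arctan _).comp θ hpt
  have hA := harc.const_mul (1+r^2)
  have hden : HasDerivAt (fun t : ℝ => 1 - 2*r*Real.cos t + r^2) (2*r*Real.sin θ) θ := by
    have := ((hasDerivAt_const θ (1:ℝ)).sub ((Real.hasDerivAt_cos θ).const_mul (2*r))).add
      (hasDerivAt_const θ (r^2))
    exact this.congr_deriv (by ring)
  have hq : HasDerivAt (fun t : ℝ => Real.sin t / (1 - 2*r*Real.cos t + r^2))
      ((Real.cos θ * d - Real.sin θ * (2*r*Real.sin θ)) / d^2) θ :=
    (Real.hasDerivAt_sin θ).div hden hd.ne'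
  have hB := hq.const_mul (r*(1-r^2))
  refine (hA.add hB).congr_deriv ?_
  -- now the scalar identity
  have hc2 : Real.cos (θ/2)^2 = (1 + Real.cos θ)/2 := by
    have h := Real.cos_two_mul (θ/2)
    rw [show 2*(θ/2) = θ by ring] at h
    linarith
  have hC1 : (0:ℝ) < 1 + Real.cos θ := by linarith
  have ht2 : Real.tan (θ/2)^2 = (1 - Real.cos θ)/(1 + Real.cos θ) := by
    rw [Real.tan_eq_sin_div_cos, div_pow, hc2]
    have hs2 : Real.sin (θ/2)^2 = (1 - Real.cos θ)/2 := by
      have := Real.sin_sq_add_cos_sq (θ/2)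
      rw [hc2] at this
      linarith
    rw [hs2]
    field_simp
  have hsq : Real.sin θ * (2*r*Real.sin θ) = 2*r*(1 - Real.cos θ^2) := by
    have := Real.sin_sq θ
    nlinarith [this]
  have h1r : (1:ℝ) - r ≠ 0 := by linarith
  have hC1' : (1:ℝ) + Real.cos θ ≠ 0 := hC1.ne'
  have key : (1 / (1 + (((1+r)/(1-r)) * Real.tan (θ/2))^2)) * (((1+r)/(1-r)) * (1 / Real.cos (θ/2)^2 * (1/2)))
      = (1-r^2)/(2*(1 - 2*r*Real.cos θ + r^2)) := by
    rw [mul_pow, ht2, hc2]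
    have hden2 : 1 + ((1+r)/(1-r))^2 * ((1 - Real.cos θ)/(1 + Real.cos θ))
        = (2*(1 - 2*r*Real.cos θ + r^2))/((1-r)^2*(1+Real.cos θ)) := by
      field_simp
      ring
    rw [hden2]
    rw [hdef] at hd
    field_simp
    ring
  rw [key, hsq]
  unfold kk
  rw [hdef]
  rw [hdef] at hd
  field_simp
  ring

lemma integral_kk {r : ℝ} (hr : |r| < 1) :
    ∫ θ in (0:ℝ)..(π/2), kk r θ
      = (1+r^2) * arctan ((1+r)/(1-r)) + r*(1-r^2)/(1+r^2) := by
  rw [intervalIntegral.integral_eq_sub_of_hasDerivAt (fun θ hθ => hasDerivAt_F hr hθ)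
    ((kk_cont hr).intervalIntegrable _ _)]
  have h1 : (π/2)/2 = π/4 := by ring
  rw [h1]
  simp [Real.tan_pi_div_four, Real.sin_pi_div_two, Real.cos_pi_div_two, Real.arctan_zero]
  rw [div_eq_mul_inv]

lemma arctan_diff {r : ℝ} (h0 : 0 ≤ r) (h1 : r < 1) :
    arctan ((1+r)/(1-r)) - arctan ((1-r)/(1+r)) = 2 * arctan r := by
  have e1 : π/4 + arctan r = arctan ((1+r)/(1-r)) := by
    have h : (1:ℝ) * r < 1 := by nlinarith
    have := Real.arctan_add h
    rw [Real.arctan_one] at this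
    simpa using this
  have e2 : π/4 - arctan r = arctan ((1-r)/(1+r)) := by
    have h : (1:ℝ) * (-r) < 1 := by nlinarith
    have := Real.arctan_add h
    rw [Real.arctan_one, Real.arctan_neg] at this
    rw [show (1 + -r)/(1 - 1*(-r)) = (1-r)/(1+r) by ring_nf] at this
    linarith
  rw [← e1, ← e2]
  ring

lemma kk_ge {r θ : ℝ} (h0 : 0 ≤ r) (h1 : r < 1) (hC : 0 ≤ Real.cos θ) :
    (1-r^2)^3/(2*(1+r^2)^2) ≤ kk r θ := by
  have hr : |r| < 1 := abs_lt.mpr ⟨by linarith, h1⟩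
  have hd := d_pos hr θ
  have hA : (0:ℝ) ≤ (1-r^2)^3 := pow_nonneg (by nlinarith) 3
  unfold kk
  apply div_le_div_of_nonneg_left hA (by positivity)
  have : 1 - 2*r*Real.cos θ + r^2 ≤ 1 + r^2 := by nlinarith
  nlinarith

lemma kk_le {r θ : ℝ} (h0 : 0 ≤ r) (h1 : r < 1) (hC : Real.cos θ ≤ 0) :
    kk r θ ≤ (1-r^2)^3/(2*(1+r^2)^2) := by
  have hr : |r| < 1 := abs_lt.mpr ⟨by linarith, h1⟩
  have hd := d_pos hr θ
  have hA : (0:ℝ) ≤ (1-r^2)^3 := pow_nonneg (by nlinarith) 3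
  unfold kk
  apply div_le_div_of_nonneg_left hA (by positivity)
  have : 1 + r^2 ≤ 1 - 2*r*Real.cos θ + r^2 := by nlinarith
  nlinarith

lemma abs_integral {r : ℝ} (h0 : 0 ≤ r) (h1 : r < 1) :
    ∫ θ in (0:ℝ)..(2*π), |kk r θ - (1-r^2)^3/(2*(1+r^2)^2)|
      = 4*((1+r^2) * arctan r + r*(1-r^2)/(1+r^2)) := by
  have hr : |r| < 1 := abs_lt.mpr ⟨by linarith, h1⟩
  have hrneg : |(-r)| < 1 := by rwa [abs_neg]
  set c2 := (1-r^2)^3/(2*(1+r^2)^2) with hc2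
  have hgc : Continuous (fun θ => |kk r θ - c2|) := ((kk_cont hr).sub continuous_const).abs
  have hper : Function.Periodic (fun θ => |kk r θ - c2|) (2*π) := by
    intro θ
    simp [kk, Real.cos_add_two_pi]
  have hshift : ∫ θ in (0:ℝ)..(2*π), |kk r θ - c2|
      = ∫ θ in (-(π/2))..(3*π/2), |kk r θ - c2| := by
    have := hper.intervalIntegral_add_eq (-(π/2)) 0
    rw [zero_add] at this
    rw [← this]
    ring_nf
  rw [hshift]
  have hsplit : ∫ θ in (-(π/2))..(3*π/2), |kk r θ - c2|
      = (∫ θ in (-(π/2))..(π/2), |kk r θ - c2|) + ∫ θ in (π/2)..(3*π/2), |kk r θ - c2| :=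
    (intervalIntegral.integral_add_adjacent_intervals
      (hgc.intervalIntegrable _ _) (hgc.intervalIntegrable _ _)).symm
  rw [hsplit]
  have hpi := Real.pi_pos
  have e1 : ∫ θ in (-(π/2))..(π/2), |kk r θ - c2| = ∫ θ in (-(π/2))..(π/2), (kk r θ - c2) := by
    apply intervalIntegral.integral_congr
    intro θ hθ
    rw [Set.uIcc_of_le (by linarith)] at hθ
    have hC : 0 ≤ Real.cos θ := Real.cos_nonneg_of_mem_Icc ⟨hθ.1, hθ.2⟩
    exact abs_of_nonneg (by linarith [kk_ge h0 h1 hC])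
  have e2 : ∫ θ in (π/2)..(3*π/2), |kk r θ - c2| = ∫ θ in (π/2)..(3*π/2), (c2 - kk r θ) := by
    apply intervalIntegral.integral_congr
    intro θ hθ
    rw [Set.uIcc_of_le (by linarith)] at hθ
    have hC : Real.cos θ ≤ 0 := Real.cos_nonpos_of_pi_div_two_le_of_le hθ.1 (by linarith [hθ.2])
    show |kk r θ - c2| = c2 - kk r θ
    rw [abs_sub_comm]
    exact abs_of_nonneg (by linarith [kk_le h0 h1 hC])
  rw [e1, e2]
  have hint1 : ∫ θ in (-(π/2))..(π/2), (kk r θ - c2)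
      = (∫ θ in (-(π/2))..(π/2), kk r θ) - π * c2 := by
    rw [intervalIntegral.integral_sub ((kk_cont hr).intervalIntegrable _ _)
      (intervalIntegrable_const), intervalIntegral.integral_const, smul_eq_mul]
    have : π/2 - -(π/2) = π := by ring
    rw [this]
  have hint2 : ∫ θ in (π/2)..(3*π/2), (c2 - kk r θ)
      = π * c2 - ∫ θ in (π/2)..(3*π/2), kk r θ := by
    rw [intervalIntegral.integral_sub (intervalIntegrable_const)
      ((kk_cont hr).intervalIntegrable _ _), intervalIntegral.integral_const, smul_eq_mul]
    have : 3*π/2 - π/2 = π := by ring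
    rw [this]
  rw [hint1, hint2]
  have heven : ∫ θ in (-(π/2))..(π/2), kk r θ = 2 * ∫ θ in (0:ℝ)..(π/2), kk r θ := by
    have h := intervalIntegral.integral_comp_neg (a := (0:ℝ)) (b := π/2) (fun θ => kk r θ)
    have h2 : ∫ θ in (0:ℝ)..(π/2), kk r (-θ) = ∫ θ in (0:ℝ)..(π/2), kk r θ := by
      apply intervalIntegral.integral_congr
      intro θ _
      simp [kk, Real.cos_neg]
    rw [h2, neg_zero] at h
    rw [← intervalIntegral.integral_add_adjacent_intervals (a := -(π/2)) (b := 0) (c := π/2)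
      ((kk_cont hr).intervalIntegrable _ _) ((kk_cont hr).intervalIntegrable _ _)]
    rw [← h]
    ring
  have hshift2 : ∫ θ in (π/2)..(3*π/2), kk r θ = 2 * ∫ θ in (0:ℝ)..(π/2), kk (-r) θ := by
    have h := intervalIntegral.integral_comp_add_right (a := -(π/2)) (b := π/2) (kk r) π
    have h2 : ∫ θ in (-(π/2))..(π/2), kk r (θ + π) = ∫ θ in (-(π/2))..(π/2), kk (-r) θ := by
      apply intervalIntegral.integral_congr
      intro θ _
      simp only [kk, Real.cos_add_pi]
      ring_nf
    rw [h2] at h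
    rw [show -(π/2) + π = π/2 by ring, show π/2 + π = 3*π/2 by ring] at h
    rw [← h]
    -- now same evenness argument for kk (-r)
    have he := intervalIntegral.integral_comp_neg (a := (0:ℝ)) (b := π/2) (fun θ => kk (-r) θ)
    have h3 : ∫ θ in (0:ℝ)..(π/2), kk (-r) (-θ) = ∫ θ in (0:ℝ)..(π/2), kk (-r) θ := by
      apply intervalIntegral.integral_congr
      intro θ _
      simp [kk, Real.cos_neg]
    rw [h3, neg_zero] at he
    rw [← intervalIntegral.integral_add_adjacent_intervals (a := -(π/2)) (b := 0) (c := π/2)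
      ((kk_cont hrneg).intervalIntegrable _ _) ((kk_cont hrneg).intervalIntegrable _ _)]
    rw [← he]
    ring
  rw [heven, hshift2, integral_kk hr, integral_kk hrneg]
  have harc := arctan_diff h0 h1
  rw [show ((1:ℝ)+(-r))/(1-(-r)) = (1-r)/(1+r) by ring_nf]
  linear_combination (2*(1+r^2)) * harc

-- helper: interval integrability of (φ θ : ℂ) * v θ for bounded measurable v, bounded cont φ
lemma II {v : ℝ → ℂ} (hv : Measurable v) (hvb : ∀ θ, ‖v θ‖ ≤ 1)
    {φ : ℝ → ℝ} (hφ : Continuous φ) {M : ℝ} (hM : ∀ θ, |φ θ| ≤ M) (a b : ℝ) :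
    IntervalIntegrable (fun θ => ((φ θ : ℝ) : ℂ) * v θ) volume a b := by
  rw [intervalIntegrable_iff]
  have hconst : IntegrableOn (fun _ : ℝ => M) (Set.uIoc a b) volume :=
    integrableOn_const measure_Ioc_lt_top.ne
  apply hconst.mono'
  · exact ((Complex.continuous_ofReal.comp hφ).measurable.mul hv).aestronglyMeasurable
  · filter_upwards with θ
    rw [norm_mul, Complex.norm_real]
    calc ‖φ θ‖ * ‖v θ‖ ≤ M * 1 :=
      mul_le_mul (hM θ) (hvb θ) (norm_nonneg _) ((abs_nonneg _).trans (hM θ))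
    _ = M := mul_one M

/-- Schwarz-type lemma for `T₂`-harmonic functions (Theorem 1.1). -/
theorem stmt1 (u ustar : ℂ → ℂ) (hmeas : Measurable ustar)
    (hbd : ∀ θ : ℝ, ‖ustar (Complex.exp ((θ:ℂ) * Complex.I))‖ ≤ 1)
    (hu : ∀ z : ℂ, ‖z‖ < 1 →
      u z = (1 / (2 * Real.pi)) *
        ∫ θ in (0:ℝ)..(2 * Real.pi),
          (K2ker (z * Complex.exp (-(θ:ℂ) * Complex.I)) : ℂ) *
            ustar (Complex.exp ((θ:ℂ) * Complex.I)))
    (z : ℂ) (hz : ‖z‖ < 1) :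
    ‖u z -
        (((1 - ‖z‖ ^ 2) ^ 3 / (1 + ‖z‖ ^ 2) ^ 2 : ℝ) : ℂ) * u 0‖
      ≤ (2 / Real.pi) * ((1 + ‖z‖ ^ 2) * Real.arctan (‖z‖)
          + ‖z‖ * (1 - ‖z‖ ^ 2) / (1 + ‖z‖ ^ 2)) := by
  have hpi := Real.pi_pos
  set r := ‖z‖ with hrdef
  have hr0 : 0 ≤ r := norm_nonneg z
  have hrabs : |r| < 1 := by rwa [abs_of_nonneg hr0]
  set α := Complex.arg z with hadef
  set c2 := (1-r^2)^3/(2*(1+r^2)^2) with hc2def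
  set v : ℝ → ℂ := fun θ => ustar (Complex.exp ((θ:ℂ) * Complex.I)) with hvdef
  have hv : Measurable v := by
    apply hmeas.comp
    exact (Complex.continuous_exp.comp (Complex.continuous_ofReal.mul continuous_const)).measurable
  have hvb : ∀ θ, ‖v θ‖ ≤ 1 := fun θ => hbd θ
  have h1r : (0:ℝ) < 1 - r := by linarith
  -- global bound for the kernel
  set M : ℝ := (1-r^2)^3/(2*(1-r)^4) with hMdef
  have hkkb : ∀ s, |kk r s| ≤ M := by
    intro s
    have hd := d_pos hrabs s
    have hA : (0:ℝ) ≤ (1-r^2)^3 := pow_nonneg (by nlinarith) 3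
    have hden : (0:ℝ) < 2*(1-r)^4 := by positivity
    have hnn : 0 ≤ kk r s := div_nonneg hA (by positivity)
    rw [abs_of_nonneg hnn]
    unfold kk
    rw [hMdef]
    apply div_le_div_of_nonneg_left hA (by positivity)
    have hdd : (1-r)^2 ≤ 1 - 2*r*Real.cos s + r^2 := by nlinarith [Real.cos_le_one s]
    nlinarith [sq_nonneg (1-r)]
  have hkk_cont : Continuous fun θ : ℝ => kk r (α - θ) :=
    (kk_cont hrabs).comp (continuous_const.sub continuous_id)
  -- kernel rewriting
  have hker : ∀ θ : ℝ, K2ker (z * Complex.exp (-(θ:ℂ) * Complex.I)) = kk r (α - θ) := by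
    intro θ
    have hz' : ((r:ℝ):ℂ) * Complex.exp ((α:ℂ) * Complex.I) = z := Complex.norm_mul_exp_arg_mul_I z
    rw [← hz', mul_assoc, ← Complex.exp_add,
      show (α:ℂ)*Complex.I + -(θ:ℂ)*Complex.I = ((α - θ : ℝ) : ℂ) * Complex.I by push_cast; ring]
    exact K2ker_eq r (α - θ)
  -- the three integrals
  have hI1 : IntervalIntegrable (fun θ => ((kk r (α-θ) : ℝ) : ℂ) * v θ) volume 0 (2*π) :=
    II hv hvb hkk_cont (fun θ => hkkb _) 0 (2*π)
  have hI2 : IntervalIntegrable (fun θ => ((c2 : ℝ) : ℂ) * v θ) volume 0 (2*π) :=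
    II hv hvb continuous_const (fun _ => le_refl |c2|) 0 (2*π)
  have hI3 : IntervalIntegrable (fun θ => ((kk r (α-θ) - c2 : ℝ) : ℂ) * v θ) volume 0 (2*π) :=
    II hv hvb (hkk_cont.sub continuous_const) (fun θ => (abs_sub (kk r (α-θ)) c2).trans
      (add_le_add (hkkb _) (le_refl |c2|))) 0 (2*π)
  -- expression for u z
  have huz : u z = (1 / (2 * (Real.pi:ℂ))) * ∫ θ in (0:ℝ)..(2*π), ((kk r (α-θ) : ℝ) : ℂ) * v θ := by
    rw [hu z hz]
    congr 1
    apply intervalIntegral.integral_congr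
    intro θ _
    simp only [hker θ, hvdef]
  -- expression for u 0
  have hu0 : u 0 = (1 / (2 * (Real.pi:ℂ))) * ∫ θ in (0:ℝ)..(2*π), (((1:ℝ)/2 : ℝ) : ℂ) * v θ := by
    rw [hu 0 (by simp)]
    congr 1
    apply intervalIntegral.integral_congr
    intro θ _
    norm_num [K2ker, hvdef]
  -- the difference
  have hdiff : u z - ((((1 - r ^ 2) ^ 3 / (1 + r ^ 2) ^ 2 : ℝ)) : ℂ) * u 0
      = (1 / (2 * (Real.pi:ℂ))) * ∫ θ in (0:ℝ)..(2*π), ((kk r (α-θ) - c2 : ℝ) : ℂ) * v θ := by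
    have e3 : ∫ θ in (0:ℝ)..(2*π), ((kk r (α-θ) - c2 : ℝ) : ℂ) * v θ
        = (∫ θ in (0:ℝ)..(2*π), ((kk r (α-θ) : ℝ) : ℂ) * v θ)
          - ∫ θ in (0:ℝ)..(2*π), ((c2 : ℝ) : ℂ) * v θ := by
      rw [← intervalIntegral.integral_sub hI1 hI2]
      apply intervalIntegral.integral_congr
      intro θ _
      push_cast
      ring
    have e4 : ∫ θ in (0:ℝ)..(2*π), ((c2 : ℝ) : ℂ) * v θ
        = (((1 - r ^ 2) ^ 3 / (1 + r ^ 2) ^ 2 : ℝ) : ℂ)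
          * ∫ θ in (0:ℝ)..(2*π), (((1:ℝ)/2 : ℝ) : ℂ) * v θ := by
      have hcc : c2 = ((1-r^2)^3/(1+r^2)^2) * (1/2) := by
        rw [hc2def]
        have : ((1:ℝ)+r^2)^2 ≠ 0 := by positivity
        field_simp
      rw [← intervalIntegral.integral_const_mul]
      apply intervalIntegral.integral_congr
      intro θ _
      rw [hcc]
      push_cast
      ring
    rw [huz, hu0, e3, e4]
    ring
  rw [hdiff, norm_mul]
  have habs1 : ‖(1 / (2 * (Real.pi:ℂ)))‖ = 1/(2*π) := by
    rw [norm_div, norm_one, norm_mul, Complex.norm_two, Complex.norm_real, Real.norm_eq_abs, abs_of_pos hpi]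
  rw [habs1]
  have hcont2 : Continuous fun θ : ℝ => |kk r (α - θ) - c2| := (hkk_cont.sub continuous_const).abs
  have hb1 : ‖(∫ θ in (0:ℝ)..(2*π), ((kk r (α-θ) - c2 : ℝ) : ℂ) * v θ)‖
      ≤ ∫ θ in (0:ℝ)..(2*π), |kk r (α-θ) - c2| := by
    calc ‖∫ θ in (0:ℝ)..(2*π), ((kk r (α-θ) - c2 : ℝ) : ℂ) * v θ‖
        ≤ ∫ θ in (0:ℝ)..(2*π), ‖((kk r (α-θ) - c2 : ℝ) : ℂ) * v θ‖ :=
          intervalIntegral.norm_integral_le_integral_norm (by positivity)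
      _ ≤ ∫ θ in (0:ℝ)..(2*π), |kk r (α-θ) - c2| := by
          apply intervalIntegral.integral_mono_on (by positivity) hI3.norm
            (hcont2.intervalIntegrable _ _)
          intro θ _
          rw [norm_mul, Complex.norm_real]
          calc ‖kk r (α-θ) - c2‖ * ‖v θ‖ ≤ ‖kk r (α-θ) - c2‖ * 1 :=
            mul_le_mul_of_nonneg_left (hvb θ) (norm_nonneg _)
          _ = |kk r (α-θ) - c2| := mul_one _
  have hshift : ∫ θ in (0:ℝ)..(2*π), |kk r (α-θ) - c2| = ∫ θ in (0:ℝ)..(2*π), |kk r θ - c2| := by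
    rw [intervalIntegral.integral_comp_sub_left (fun s => |kk r s - c2|) α]
    have hper : Function.Periodic (fun s => |kk r s - c2|) (2*π) := by
      intro s
      simp [kk, Real.cos_add_two_pi]
    have h2 := hper.intervalIntegral_add_eq (α - 2*π) 0
    rw [zero_add] at h2
    rw [show α - 0 = α - 2*π + 2*π by ring]
    exact h2
  rw [hshift, hc2def] at hb1
  rw [abs_integral hr0 hz] at hb1
  have hfin : (1/(2*π)) * (4*((1+r^2) * arctan r + r*(1-r^2)/(1+r^2)))
      = (2/π) * ((1+r^2) * arctan r + r*(1-r^2)/(1+r^2)) := by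
    field_simp
    ring
  calc 1/(2*π) * ‖(∫ θ in (0:ℝ)..(2*π), ((kk r (α-θ) - c2 : ℝ) : ℂ) * v θ)‖
      ≤ 1/(2*π) * (4*((1+r^2) * arctan r + r*(1-r^2)/(1+r^2))) := by
        apply mul_le_mul_of_nonneg_left _ (by positivity)
        exact hb1
    _ = (2/π) * ((1+r^2) * arctan r + r*(1-r^2)/(1+r^2)) := hfin
end

section
/- Let u : 𝔻 → ℂ be given by u(z) = (1/2π)∫₀^{2π} K₂(z·e^{-iθ})·u*(e^{iθ}) dθ for some measurable u* : 𝕋 → ℂ with |u*(e^{iθ})| ≤ 1 for all θ. Then |u_z(0)| + |u_{z̄}(0)| ≤ 4/π. -/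
open Real MeasureTheory

/-! ### Auxiliary lemmas -/

noncomputable def nD (a : ℂ) : ℂ →L[ℝ] ℝ :=
  (2:ℝ) • (Complex.reCLM.comp (ContinuousLinearMap.mul ℝ ℂ ((starRingEnd ℂ) a)))

lemma nD_apply (a v : ℂ) : nD a v = 2 * ((starRingEnd ℂ) a * v).re := rfl

lemma nD_norm_le (a : ℂ) : ‖nD a‖ ≤ 2 * ‖a‖ := by
  refine ContinuousLinearMap.opNorm_le_bound _ (by positivity) fun v => ?_
  rw [nD_apply]
  have : |((starRingEnd ℂ) a * v).re| ≤ ‖a‖ * ‖v‖ := by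
    calc |((starRingEnd ℂ) a * v).re| ≤ ‖(starRingEnd ℂ) a * v‖ :=
      Complex.abs_re_le_norm _
    _ = ‖a‖ * ‖v‖ := by rw [norm_mul, Complex.norm_conj]
  simp only [Real.norm_eq_abs, abs_mul]
  calc |2| * |((starRingEnd ℂ) a * v).re| ≤ 2 * (‖a‖ * ‖v‖) := by
        rw [abs_two]; nlinarith [norm_nonneg v, norm_nonneg a]
  _ = 2 * ‖a‖ * ‖v‖ := by ring

lemma hasFDerivAt_normSq (a : ℂ) : HasFDerivAt Complex.normSq (nD a) a := by
  have h1 : HasFDerivAt (fun z : ℂ => z.re * z.re + z.im * z.im)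
      ((a.re • Complex.reCLM + a.re • Complex.reCLM) +
       (a.im • Complex.imCLM + a.im • Complex.imCLM)) a :=
    ((Complex.reCLM.hasFDerivAt.mul Complex.reCLM.hasFDerivAt).add
      (Complex.imCLM.hasFDerivAt.mul Complex.imCLM.hasFDerivAt))
  have h2 : (fun z : ℂ => z.re * z.re + z.im * z.im) = Complex.normSq := by
    funext z; rw [Complex.normSq_apply]
  rw [h2] at h1
  convert h1 using 1
  ext v
  simp [nD_apply, Complex.mul_re, Complex.conj_re, Complex.conj_im]
  ring

noncomputable def K2' (w : ℂ) : ℂ →L[ℝ] ℝ :=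
  (-3 * (1 - Complex.normSq w) ^ 2 / (2 * Complex.normSq (1 - w) ^ 2)) • nD w
    + ((1 - Complex.normSq w) ^ 3 / Complex.normSq (1 - w) ^ 3) • nD (1 - w)

lemma K2'_zero_apply (v : ℂ) : K2' 0 v = 2 * v.re := by
  simp [K2', nD_apply]

lemma K2ker_eq_s5 (w : ℂ) :
    K2ker w = (1 - Complex.normSq w) ^ 3 / (2 * Complex.normSq (1 - w) ^ 2) := by
  unfold K2ker
  rw [Complex.sq_norm]
  congr 2
  rw [← Complex.sq_norm]
  ring

lemma hasFDerivAt_K2ker {w : ℂ} (hw : ‖w‖ < 1) :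
    HasFDerivAt K2ker (K2' w) w := by
  have hne : (1 : ℂ) - w ≠ 0 := by
    intro h
    rw [sub_eq_zero] at h
    rw [← h] at hw
    simp at hw
  have hm : Complex.normSq (1 - w) ≠ 0 := ne_of_gt (Complex.normSq_pos.mpr hne)
  have hf : HasFDerivAt (fun z : ℂ => 1 - Complex.normSq z) (-(nD w)) w :=
    (hasFDerivAt_normSq w).const_sub 1
  have hf3 := (hf.mul hf).mul hf
  have hg : HasFDerivAt (fun z : ℂ => Complex.normSq (1 - z)) (-(nD (1 - w))) w := by
    have h1 : HasFDerivAt (fun z : ℂ => 1 - z) (-(ContinuousLinearMap.id ℝ ℂ)) w := by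
      simpa using (hasFDerivAt_id w).const_sub (1:ℂ)
    have := (hasFDerivAt_normSq (1 - w)).comp w h1
    refine this.congr_fderiv ?_
    ext v; simp
  have hg2 := ((hg.mul hg).const_mul (2:ℝ))
  have hd : (2 * (Complex.normSq (1 - w) * Complex.normSq (1 - w))) ≠ 0 := by
    intro h; apply hm; nlinarith [Complex.normSq_nonneg (1-w)]
  have hinv : HasDerivAt (fun y : ℝ => y⁻¹)
      (-((2 * (Complex.normSq (1 - w) * Complex.normSq (1 - w))) ^ 2)⁻¹)
      (2 * (Complex.normSq (1 - w) * Complex.normSq (1 - w))) := hasDerivAt_inv hd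
  have hcomp := hinv.comp_hasFDerivAt w hg2
  have hprod := hf3.mul hcomp
  have heq : K2ker = fun z : ℂ =>
      ((1 - Complex.normSq z) * (1 - Complex.normSq z) * (1 - Complex.normSq z)) *
        (2 * (Complex.normSq (1 - z) * Complex.normSq (1 - z)))⁻¹ := by
    funext z
    rw [K2ker_eq_s5, div_eq_mul_inv]
    ring_nf
  rw [heq]
  refine hprod.congr_fderiv ?_
  ext v
  simp only [K2', ContinuousLinearMap.add_apply, ContinuousLinearMap.smul_apply,
    ContinuousLinearMap.neg_apply, smul_eq_mul, ContinuousLinearMap.coe_smul', Pi.smul_apply,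
    ContinuousLinearMap.coe_sub', Pi.sub_apply, ContinuousLinearMap.coe_add', Pi.add_apply, Pi.mul_apply,
    Function.comp_apply]
  field_simp
  ring

lemma K2'_norm_le {w : ℂ} (hw : ‖w‖ ≤ 1/2) : ‖K2' w‖ ≤ 216 := by
  have ha0 : 0 ≤ ‖w‖ := norm_nonneg w
  have hb1 : (1:ℝ)/2 ≤ ‖1 - w‖ := by
    have h := norm_sub_norm_le (1:ℂ) w
    simp only [norm_one] at h
    linarith
  have hb2 : ‖1 - w‖ ≤ 3/2 := by
    have h := norm_sub_le (1:ℂ) w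
    simp only [norm_one] at h
    linarith
  have hn1 : Complex.normSq w ≤ 1/4 := by rw [← Complex.sq_norm]; nlinarith
  have hn0 : 0 ≤ Complex.normSq w := Complex.normSq_nonneg w
  have hm1 : (1:ℝ)/4 ≤ Complex.normSq (1 - w) := by rw [← Complex.sq_norm]; nlinarith
  have hm2 : Complex.normSq (1 - w) ≤ 9/4 := by rw [← Complex.sq_norm]; nlinarith
  have h1 : ‖nD w‖ ≤ 1 := le_trans (nD_norm_le w) (by linarith)
  have h2 : ‖nD (1 - w)‖ ≤ 3 := le_trans (nD_norm_le _) (by linarith)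
  have hc1 : |(-3 * (1 - Complex.normSq w) ^ 2 / (2 * Complex.normSq (1 - w) ^ 2))| ≤ 24 := by
    rw [abs_div]
    rw [div_le_iff₀ (by positivity : (0:ℝ) < |2 * Complex.normSq (1 - w) ^ 2|)]
    rw [abs_of_nonpos (by nlinarith : -3 * (1 - Complex.normSq w) ^ 2 ≤ 0),
      abs_of_nonneg (by positivity)]
    nlinarith
  have hc2 : |((1 - Complex.normSq w) ^ 3 / Complex.normSq (1 - w) ^ 3)| ≤ 64 := by
    rw [abs_div]
    rw [div_le_iff₀ (by rw [abs_of_nonneg (by positivity)]; positivity)]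
    rw [abs_of_nonneg (by nlinarith : (0:ℝ) ≤ (1 - Complex.normSq w) ^ 3),
      abs_of_nonneg (by positivity)]
    nlinarith
  calc ‖K2' w‖ ≤ ‖(-3 * (1 - Complex.normSq w) ^ 2 / (2 * Complex.normSq (1 - w) ^ 2)) • nD w‖
      + ‖((1 - Complex.normSq w) ^ 3 / Complex.normSq (1 - w) ^ 3) • nD (1 - w)‖ :=
        norm_add_le _ _
    _ = |(-3 * (1 - Complex.normSq w) ^ 2 / (2 * Complex.normSq (1 - w) ^ 2))| * ‖nD w‖
      + |((1 - Complex.normSq w) ^ 3 / Complex.normSq (1 - w) ^ 3)| * ‖nD (1 - w)‖ := by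
        have e1 := norm_smul (α := ℝ) (β := ℂ →L[ℝ] ℝ)
          (-3 * (1 - Complex.normSq w) ^ 2 / (2 * Complex.normSq (1 - w) ^ 2)) (nD w)
        have e2 := norm_smul (α := ℝ) (β := ℂ →L[ℝ] ℝ)
          ((1 - Complex.normSq w) ^ 3 / Complex.normSq (1 - w) ^ 3) (nD (1 - w))
        simp only [Real.norm_eq_abs] at e1 e2
        rw [e1, e2]
    _ ≤ 24 * 1 + 64 * 3 :=
        add_le_add (mul_le_mul hc1 h1 (norm_nonneg _) (by norm_num))
          (mul_le_mul hc2 h2 (norm_nonneg _) (by norm_num))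
    _ ≤ 216 := by norm_num

lemma abs_one_add_exp (x : ℝ) :
    ‖1 + Complex.exp ((x:ℂ) * Complex.I)‖ = 2 * |Real.cos (x/2)| := by
  have key : Complex.exp (((x/2 : ℝ):ℂ) * Complex.I) * (2 * Complex.cos ((x/2 : ℝ):ℂ))
      = 1 + Complex.exp ((x:ℂ) * Complex.I) := by
    rw [Complex.cos]
    have e1 : (((x/2:ℝ)):ℂ) * Complex.I + (((x/2:ℝ)):ℂ) * Complex.I = (x:ℂ) * Complex.I := by
      push_cast; ring
    calc Complex.exp (((x/2 : ℝ):ℂ) * Complex.I) *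
          (2 * ((Complex.exp (((x/2:ℝ):ℂ) * Complex.I)
            + Complex.exp (-((x/2:ℝ):ℂ) * Complex.I)) / 2))
        = Complex.exp (((x/2:ℝ):ℂ) * Complex.I) * Complex.exp (((x/2:ℝ):ℂ) * Complex.I)
          + Complex.exp (((x/2:ℝ):ℂ) * Complex.I) * Complex.exp (-((x/2:ℝ):ℂ) * Complex.I) := by
          ring
      _ = 1 + Complex.exp ((x:ℂ) * Complex.I) := by
          rw [← Complex.exp_add, ← Complex.exp_add, e1]
          rw [show (((x/2:ℝ)):ℂ) * Complex.I + -((x/2:ℝ):ℂ) * Complex.I = 0 by ring]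
          rw [Complex.exp_zero]
          ring
  rw [← key, norm_mul, Complex.norm_exp_ofReal_mul_I, one_mul, norm_mul]
  rw [← Complex.ofReal_cos, Complex.norm_real, Real.norm_eq_abs]
  simp

lemma integral_abs_cos : ∫ θ in (0:ℝ)..(2*π), |Real.cos θ| = 4 := by
  have hcont : ∀ a b : ℝ, IntervalIntegrable (fun θ => |Real.cos θ|) volume a b :=
    fun a b => (Real.continuous_cos.abs).intervalIntegrable a b
  have hsin32 : Real.sin (3*π/2) = -1 := by
    rw [show (3*π/2 : ℝ) = π + π/2 by ring, Real.sin_add]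
    simp
  have h1 : ∫ θ in (0:ℝ)..(π/2), |Real.cos θ| = 1 := by
    rw [intervalIntegral.integral_congr (g := Real.cos)]
    · rw [integral_cos]; simp
    · intro θ hθ
      rw [Set.uIcc_of_le (by positivity)] at hθ
      show |Real.cos θ| = Real.cos θ
      exact abs_of_nonneg (Real.cos_nonneg_of_mem_Icc ⟨by linarith [hθ.1, pi_pos], hθ.2⟩)
  have h2 : ∫ θ in (π/2)..(3*π/2), |Real.cos θ| = 2 := by
    rw [intervalIntegral.integral_congr (g := fun θ => -Real.cos θ)]
    · rw [intervalIntegral.integral_neg, integral_cos, hsin32]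
      norm_num
    · intro θ hθ
      rw [Set.uIcc_of_le (by linarith [pi_pos])] at hθ
      show |Real.cos θ| = -Real.cos θ
      exact abs_of_nonpos (Real.cos_nonpos_of_pi_div_two_le_of_le hθ.1 (by linarith [hθ.2]))
  have h3 : ∫ θ in (3*π/2)..(2*π), |Real.cos θ| = 1 := by
    rw [intervalIntegral.integral_congr (g := Real.cos)]
    · rw [integral_cos, hsin32]; simp
    · intro θ hθ
      rw [Set.uIcc_of_le (by linarith [pi_pos])] at hθ
      show |Real.cos θ| = Real.cos θ
      rw [← Real.cos_sub_two_pi θ]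
      refine abs_of_nonneg (Real.cos_nonneg_of_mem_Icc ⟨?_, ?_⟩)
      · have := hθ.1; linarith
      · have := hθ.2; linarith [pi_pos]
  have h6 := intervalIntegral.integral_add_adjacent_intervals (a := (0:ℝ)) (b := π/2)
    (c := 3*π/2) (hcont _ _) (hcont _ _)
  have h5 := intervalIntegral.integral_add_adjacent_intervals (a := (0:ℝ)) (b := 3*π/2)
    (c := 2*π) (hcont _ _) (hcont _ _)
  rw [← h5, ← h6, h1, h2, h3]
  norm_num

lemma integral_abs_cos_shift (d : ℝ) : ∫ θ in (0:ℝ)..(2*π), |Real.cos (θ + d)| = 4 := by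
  rw [intervalIntegral.integral_comp_add_right (fun t => |Real.cos t|) d]
  have hper : Function.Periodic (fun t => |Real.cos t|) (2*π) := fun t => by
    simp [Real.cos_add_two_pi]
  rw [zero_add, show 2*π + d = d + 2*π by ring]
  have := hper.intervalIntegral_add_eq d 0
  simp only [zero_add] at this
  rw [this, integral_abs_cos]

lemma integral_abs_combo (α β : ℂ) (hα : ‖α‖ = 1) (hβ : ‖β‖ = 1) :
    ∫ θ in (0:ℝ)..(2*π),
      ‖α * Complex.exp (-(θ:ℂ) * Complex.I) + β * Complex.exp ((θ:ℂ) * Complex.I)‖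
      = 8 := by
  obtain ⟨a, ha⟩ := (Complex.norm_eq_one_iff α).mp hα
  obtain ⟨b, hb⟩ := (Complex.norm_eq_one_iff β).mp hβ
  have hpt : ∀ θ : ℝ,
      ‖α * Complex.exp (-(θ:ℂ) * Complex.I) + β * Complex.exp ((θ:ℂ) * Complex.I)‖
      = 2 * |Real.cos (θ + (b-a)/2)| := by
    intro θ
    have e1 : α * Complex.exp (-(θ:ℂ) * Complex.I)
        = Complex.exp (((a - θ : ℝ):ℂ) * Complex.I) := by
      rw [← ha, ← Complex.exp_add]; congr 1; push_cast; ring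
    have e2 : β * Complex.exp ((θ:ℂ) * Complex.I)
        = Complex.exp (((b + θ : ℝ):ℂ) * Complex.I) := by
      rw [← hb, ← Complex.exp_add]; congr 1; push_cast; ring
    have e3 : Complex.exp (((a - θ : ℝ):ℂ) * Complex.I)
          * Complex.exp (((b - a + 2*θ : ℝ):ℂ) * Complex.I)
        = Complex.exp (((b + θ : ℝ):ℂ) * Complex.I) := by
      rw [← Complex.exp_add]; congr 1; push_cast; ring
    have factor : α * Complex.exp (-(θ:ℂ) * Complex.I) + β * Complex.exp ((θ:ℂ) * Complex.I)
        = Complex.exp (((a - θ : ℝ):ℂ) * Complex.I)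
          * (1 + Complex.exp (((b - a + 2*θ : ℝ):ℂ) * Complex.I)) := by
      rw [e1, e2, mul_add, mul_one, e3]
    rw [factor, norm_mul, Complex.norm_exp_ofReal_mul_I, one_mul, abs_one_add_exp]
    congr 2
    ring
  simp only [hpt]
  rw [intervalIntegral.integral_const_mul, integral_abs_cos_shift]
  norm_num

set_option maxHeartbeats 2000000 in
lemma measurable_smulRightL_comp {L : ℝ → ℂ →L[ℝ] ℝ} (hL : Continuous L) {s : ℝ → ℂ}
    (hs : Measurable s) :
    Measurable fun θ => ContinuousLinearMap.smulRightL ℝ ℂ ℂ (L θ) (s θ) := by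
  have hcont2 : Continuous fun p : (ℂ →L[ℝ] ℝ) × ℂ =>
      ContinuousLinearMap.smulRightL ℝ ℂ ℂ p.1 p.2 :=
    (ContinuousLinearMap.smulRightL ℝ ℂ ℂ).continuous₂
  exact hcont2.measurable.comp (hL.measurable.prodMk hs)

set_option maxHeartbeats 1000000 in
/-- Gradient estimate at the origin for `T₂`-harmonic functions (Theorem 1.2, (1.5)). -/
theorem stmt5 (u ustar : ℂ → ℂ) (hmeas : Measurable ustar)
    (hbd : ∀ θ : ℝ, ‖ustar (Complex.exp ((θ:ℂ) * Complex.I))‖ ≤ 1)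
    (hu : ∀ z : ℂ, ‖z‖ < 1 →
      u z = (1 / (2 * Real.pi)) *
        ∫ θ in (0:ℝ)..(2 * Real.pi),
          (K2ker (z * Complex.exp (-(θ:ℂ) * Complex.I)) : ℂ) *
            ustar (Complex.exp ((θ:ℂ) * Complex.I))) :
    ‖wderivZ u 0‖ + ‖wderivZbar u 0‖ ≤ 4 / Real.pi := by
  set c : ℝ → ℂ := fun θ => Complex.exp (-(θ:ℂ) * Complex.I) with hcdef
  set s : ℝ → ℂ := fun θ => ustar (Complex.exp ((θ:ℂ) * Complex.I)) with hsdef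
  have hccont : Continuous c := by
    rw [hcdef]
    exact Complex.continuous_exp.comp ((Complex.continuous_ofReal.neg).mul continuous_const)
  have hecont : Continuous fun θ : ℝ => Complex.exp ((θ:ℂ) * Complex.I) :=
    Complex.continuous_exp.comp (Complex.continuous_ofReal.mul continuous_const)
  have hsmeas : Measurable s := hmeas.comp hecont.measurable
  have hsbd : ∀ θ : ℝ, ‖s θ‖ ≤ 1 := fun θ => hbd θ
  have habsc : ∀ θ : ℝ, ‖c θ‖ = 1 := by
    intro θ
    rw [hcdef]
    show ‖Complex.exp (-(θ:ℂ) * Complex.I)‖ = 1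
    rw [show -(θ:ℂ) * Complex.I = ((-θ:ℝ):ℂ) * Complex.I by push_cast; ring]
    exact Complex.norm_exp_ofReal_mul_I (-θ)
  set F : ℂ → ℝ → ℂ := fun x θ => (K2ker (x * c θ) : ℂ) * s θ with hFdef
  set F' : ℂ → ℝ → ℂ →L[ℝ] ℂ := fun x θ =>
    ((K2' (x * c θ)).comp (ContinuousLinearMap.mul ℝ ℂ (c θ))).smulRight (s θ) with hF'def
  -- differentiability in x
  have hdiff : ∀ (θ : ℝ) (x : ℂ), x ∈ Metric.ball (0:ℂ) (1/2) →
      HasFDerivAt (fun y => F y θ) (F' x θ) x := by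
    intro θ x hx
    have hxa : ‖x‖ < 1 := by
      have := Metric.mem_ball.mp hx
      rw [dist_zero_right] at this
      linarith
    have hx1 : ‖x * c θ‖ < 1 := by
      rw [norm_mul, habsc θ, mul_one]; exact hxa
    have hmul : HasFDerivAt (fun y : ℂ => y * c θ)
        (ContinuousLinearMap.mul ℝ ℂ (c θ)) x := by
      have h := (ContinuousLinearMap.mul ℝ ℂ (c θ)).hasFDerivAt (x := x)
      have he : (fun y : ℂ => y * c θ) = fun y => (ContinuousLinearMap.mul ℝ ℂ (c θ)) y :=
        funext fun y => by simp [mul_comm]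
      rw [he]; exact h
    have hK := (hasFDerivAt_K2ker hx1).comp x hmul
    have hsm := hK.smul_const (s θ)
    exact hsm.congr_of_eventuallyEq (Filter.Eventually.of_forall fun y => by
      rw [hFdef]
      show (K2ker (y * c θ) : ℂ) * s θ = K2ker (y * c θ) • s θ
      rw [Complex.real_smul])
  -- measurability in θ
  have hFmeasball : ∀ x : ℂ, ‖x‖ < 1 →
      AEStronglyMeasurable (F x) (volume.restrict (Set.uIoc (0:ℝ) (2*π))) := by
    intro x hx
    have hcont : Continuous fun θ => (K2ker (x * c θ) : ℂ) := by
      apply Complex.continuous_ofReal.comp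
      rw [continuous_iff_continuousAt]
      intro θ
      have h1 : ‖x * c θ‖ < 1 := by rw [norm_mul, habsc θ, mul_one]; exact hx
      exact ContinuousAt.comp (g := K2ker) (f := fun θ : ℝ => x * c θ) (x := θ)
        ((hasFDerivAt_K2ker h1).continuousAt) ((continuous_const.mul hccont).continuousAt)
    exact (hcont.aestronglyMeasurable).mul hsmeas.aestronglyMeasurable
  have hK20 : K2ker 0 = 1/2 := by simp [K2ker]
  have hFint : IntervalIntegrable (F 0) volume 0 (2*π) := by
    apply (intervalIntegrable_const (c := (1:ℝ))).mono_fun (hFmeasball 0 (by simp))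
    filter_upwards with θ
    rw [hFdef]
    show ‖(K2ker (0 * c θ) : ℂ) * s θ‖ ≤ ‖(1:ℝ)‖
    rw [norm_mul, zero_mul]
    rw [Complex.norm_real, Real.norm_eq_abs, hK20, norm_one]
    calc |1/2| * ‖s θ‖ ≤ |1/2| * 1 := by
          apply mul_le_mul_of_nonneg_left (hsbd θ) (abs_nonneg _)
      _ ≤ 1 := by rw [abs_of_nonneg (by norm_num : (0:ℝ) ≤ 1/2)]; norm_num
  have hF'meas : AEStronglyMeasurable (F' 0) (volume.restrict (Set.uIoc (0:ℝ) (2*π))) := by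
    have hLcont : Continuous fun θ => ContinuousLinearMap.compL ℝ ℂ ℂ ℝ (K2' 0)
        (ContinuousLinearMap.mul ℝ ℂ (c θ)) :=
      ((ContinuousLinearMap.compL ℝ ℂ ℂ ℝ (K2' 0)).continuous).comp
        ((ContinuousLinearMap.mul ℝ ℂ).continuous.comp hccont)
    have heq : F' 0 = fun θ => ContinuousLinearMap.smulRightL ℝ ℂ ℂ
        (ContinuousLinearMap.compL ℝ ℂ ℂ ℝ (K2' 0)
          (ContinuousLinearMap.mul ℝ ℂ (c θ))) (s θ) := by
      funext θ
      rw [hF'def]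
      show ((K2' (0 * c θ)).comp (ContinuousLinearMap.mul ℝ ℂ (c θ))).smulRight (s θ) = _
      rw [zero_mul, ContinuousLinearMap.compL_apply]
      rfl
    rw [heq]
    exact (measurable_smulRightL_comp hLcont hsmeas).aestronglyMeasurable
  have hmulnorm : ∀ θ : ℝ, ‖ContinuousLinearMap.mul ℝ ℂ (c θ)‖ ≤ 1 := by
    intro θ
    refine ContinuousLinearMap.opNorm_le_bound _ (by norm_num) fun v => ?_
    simp only [ContinuousLinearMap.mul_apply']
    calc ‖c θ * v‖ ≤ ‖c θ‖ * ‖v‖ := norm_mul_le _ _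
      _ = 1 * ‖v‖ := by rw [habsc θ]
  have hbound : ∀ (θ : ℝ) (x : ℂ), x ∈ Metric.ball (0:ℂ) (1/2) → ‖F' x θ‖ ≤ 216 := by
    intro θ x hx
    have hxa : ‖x‖ ≤ 1/2 := by
      have := Metric.mem_ball.mp hx
      rw [dist_zero_right] at this
      linarith
    have h1 : ‖x * c θ‖ ≤ 1/2 := by rw [norm_mul, habsc θ, mul_one]; exact hxa
    have h2 : ‖(K2' (x * c θ)).comp (ContinuousLinearMap.mul ℝ ℂ (c θ))‖ ≤ 216 := by
      calc ‖(K2' (x * c θ)).comp (ContinuousLinearMap.mul ℝ ℂ (c θ))‖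
          ≤ ‖K2' (x * c θ)‖ * ‖ContinuousLinearMap.mul ℝ ℂ (c θ)‖ :=
            ContinuousLinearMap.opNorm_comp_le _ _
        _ ≤ 216 * 1 := mul_le_mul (K2'_norm_le h1) (hmulnorm θ) (norm_nonneg _) (by norm_num)
        _ = 216 := mul_one _
    rw [hF'def]
    show ‖((K2' (x * c θ)).comp (ContinuousLinearMap.mul ℝ ℂ (c θ))).smulRight (s θ)‖ ≤ 216
    rw [ContinuousLinearMap.norm_smulRight_apply]
    calc ‖(K2' (x * c θ)).comp (ContinuousLinearMap.mul ℝ ℂ (c θ))‖ * ‖s θ‖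
        ≤ 216 * 1 := mul_le_mul h2 (by exact hsbd θ)
          (norm_nonneg _) (by norm_num)
      _ = 216 := mul_one _
  -- differentiation under the integral sign
  have key := intervalIntegral.hasFDerivAt_integral_of_dominated_of_fderiv_le
    (F := F) (F' := F') (x₀ := (0:ℂ)) (a := 0) (b := 2*π) (bound := fun _ => (216:ℝ))
    (μ := volume) (s := Metric.ball (0:ℂ) (1/2)) (Metric.ball_mem_nhds _ (by norm_num))
    (by
      filter_upwards [Metric.ball_mem_nhds (0:ℂ) (by norm_num : (0:ℝ) < 1/2)] with x hx
      refine hFmeasball x ?_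
      have := Metric.mem_ball.mp hx
      rw [dist_zero_right] at this
      linarith)
    hFint hF'meas
    (Filter.Eventually.of_forall fun θ _ x hx => hbound θ x hx)
    intervalIntegrable_const
    (Filter.Eventually.of_forall fun θ _ x hx => hdiff θ x hx)
  -- integrability of the derivative family
  have hF'int : IntervalIntegrable (F' 0) volume 0 (2*π) := by
    apply (intervalIntegrable_const (c := (216:ℝ))).mono_fun hF'meas
    filter_upwards with θ
    rw [Real.norm_eq_abs, abs_of_nonneg (by norm_num : (0:ℝ) ≤ 216)]
    exact hbound θ 0 (Metric.mem_ball_self (by norm_num))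
  set L : ℂ →L[ℝ] ℂ := ∫ θ in (0:ℝ)..(2*π), F' 0 θ with hLdef
  -- pointwise values of F' 0
  have hre : ∀ θ : ℝ, (c θ).re = Real.cos θ := by
    intro θ
    rw [hcdef]
    show (Complex.exp (-(θ:ℂ) * Complex.I)).re = _
    rw [show -(θ:ℂ) * Complex.I = ((-θ:ℝ):ℂ) * Complex.I by push_cast; ring]
    rw [Complex.exp_ofReal_mul_I_re, Real.cos_neg]
  have him : ∀ θ : ℝ, (c θ).im = -Real.sin θ := by
    intro θ
    rw [hcdef]
    show (Complex.exp (-(θ:ℂ) * Complex.I)).im = _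
    rw [show -(θ:ℂ) * Complex.I = ((-θ:ℝ):ℂ) * Complex.I by push_cast; ring]
    rw [Complex.exp_ofReal_mul_I_im, Real.sin_neg]
  have hptv : ∀ (v : ℂ) (θ : ℝ), (F' 0 θ) v = ((2 * (c θ * v).re : ℝ) : ℂ) * s θ := by
    intro v θ
    rw [hF'def]
    show (((K2' (0 * c θ)).comp (ContinuousLinearMap.mul ℝ ℂ (c θ))).smulRight (s θ)) v = _
    rw [ContinuousLinearMap.smulRight_apply]
    simp only [ContinuousLinearMap.coe_comp', Function.comp_apply,
      ContinuousLinearMap.mul_apply', zero_mul, K2'_zero_apply, Complex.real_smul]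
  have hL1 : L 1 = ∫ θ in (0:ℝ)..(2*π), ((2 * Real.cos θ : ℝ) : ℂ) * s θ := by
    rw [hLdef, ContinuousLinearMap.intervalIntegral_apply hF'int 1]
    refine intervalIntegral.integral_congr fun θ _ => ?_
    rw [hptv 1 θ, mul_one, hre θ]
  have hLI : L Complex.I = ∫ θ in (0:ℝ)..(2*π), ((2 * Real.sin θ : ℝ) : ℂ) * s θ := by
    rw [hLdef, ContinuousLinearMap.intervalIntegral_apply hF'int Complex.I]
    refine intervalIntegral.integral_congr fun θ _ => ?_
    rw [hptv Complex.I θ]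
    have hsin : (c θ * Complex.I).re = Real.sin θ := by
      rw [Complex.mul_I_re, him θ]; ring
    rw [hsin]
  -- derivative of u at 0
  have huev : u =ᶠ[nhds (0:ℂ)] fun z => (1 / (2 * (π:ℂ))) * ∫ θ in (0:ℝ)..(2*π), F z θ := by
    filter_upwards [Metric.ball_mem_nhds (0:ℂ) one_pos] with z hz
    have hz1 : ‖z‖ < 1 := by
      have := Metric.mem_ball.mp hz
      rw [dist_zero_right] at this
      exact this
    rw [hu z hz1]
  have hDu : HasFDerivAt u ((1 / (2 * (π:ℂ))) • L) 0 :=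
    (key.const_mul (1 / (2 * (π:ℂ)))).congr_of_eventuallyEq huev
  have hfd : fderiv ℝ u 0 = (1 / (2 * (π:ℂ))) • L := hDu.fderiv
  -- integrability helper
  have hii : ∀ φ : ℝ → ℂ, Continuous φ → (∀ θ, ‖φ θ‖ ≤ 2) →
      IntervalIntegrable (fun θ => φ θ * s θ) volume 0 (2*π) := by
    intro φ hφ hM
    apply (intervalIntegrable_const (c := (2:ℝ))).mono_fun
      ((hφ.aestronglyMeasurable).mul hsmeas.aestronglyMeasurable)
    filter_upwards with θ
    show ‖φ θ * s θ‖ ≤ ‖(2:ℝ)‖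
    rw [norm_mul, Real.norm_eq_abs, abs_of_nonneg (by norm_num : (0:ℝ) ≤ 2)]
    calc ‖φ θ‖ * ‖s θ‖ ≤ 2 * 1 := mul_le_mul (by exact hM θ)
          (by exact hsbd θ) (norm_nonneg _) (by norm_num)
      _ = 2 := by norm_num
  have hf1int : IntervalIntegrable (fun θ => ((2 * Real.cos θ : ℝ) : ℂ) * s θ) volume 0 (2*π) := by
    apply hii _ (Complex.continuous_ofReal.comp (continuous_const.mul Real.continuous_cos))
    intro θ
    show ‖((2 * Real.cos θ : ℝ) : ℂ)‖ ≤ 2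
    rw [Complex.norm_real, Real.norm_eq_abs, abs_mul, abs_two]
    calc 2 * |Real.cos θ| ≤ 2 * 1 := by
          have := Real.abs_cos_le_one θ
          nlinarith
      _ = 2 := by norm_num
  have hf2int : IntervalIntegrable (fun θ => ((2 * Real.sin θ : ℝ) : ℂ) * s θ) volume 0 (2*π) := by
    apply hii _ (Complex.continuous_ofReal.comp (continuous_const.mul Real.continuous_sin))
    intro θ
    show ‖((2 * Real.sin θ : ℝ) : ℂ)‖ ≤ 2
    rw [Complex.norm_real, Real.norm_eq_abs, abs_mul, abs_two]
    calc 2 * |Real.sin θ| ≤ 2 * 1 := by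
          have := Real.abs_sin_le_one θ
          nlinarith
      _ = 2 := by norm_num
  -- exponential identities
  have hcexp : ∀ θ : ℝ, c θ = ((Real.cos θ : ℝ):ℂ) - ((Real.sin θ : ℝ):ℂ) * Complex.I := by
    intro θ
    rw [hcdef]
    show Complex.exp (-(θ:ℂ) * Complex.I) = _
    rw [show -(θ:ℂ) = ((-θ:ℝ):ℂ) by push_cast; ring, Complex.exp_mul_I]
    rw [← Complex.ofReal_cos, ← Complex.ofReal_sin]
    push_cast [Real.cos_neg, Real.sin_neg]
    ring
  have heexp : ∀ θ : ℝ, Complex.exp ((θ:ℂ) * Complex.I)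
      = ((Real.cos θ : ℝ):ℂ) + ((Real.sin θ : ℝ):ℂ) * Complex.I := by
    intro θ
    rw [Complex.exp_mul_I, ← Complex.ofReal_cos, ← Complex.ofReal_sin]
  -- identify the Wirtinger derivatives
  have hwz : wderivZ u 0 = (1 / (2 * (π:ℂ))) * ∫ θ in (0:ℝ)..(2*π), c θ * s θ := by
    have hint : ∫ θ in (0:ℝ)..(2*π), c θ * s θ
        = (1/2 : ℂ) * ((∫ θ in (0:ℝ)..(2*π), ((2 * Real.cos θ : ℝ) : ℂ) * s θ)
          - Complex.I * ∫ θ in (0:ℝ)..(2*π), ((2 * Real.sin θ : ℝ) : ℂ) * s θ) := by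
      rw [← intervalIntegral.integral_const_mul Complex.I]
      rw [← intervalIntegral.integral_sub hf1int (hf2int.const_mul Complex.I)]
      rw [← intervalIntegral.integral_const_mul ((1:ℂ)/2)]
      refine intervalIntegral.integral_congr fun θ _ => ?_
      rw [hcexp θ]
      push_cast
      ring
    simp only [wderivZ]
    rw [hfd]
    simp only [ContinuousLinearMap.coe_smul', Pi.smul_apply, smul_eq_mul]
    rw [hL1, hLI, hint]
    ring
  have hwzbar : wderivZbar u 0
      = (1 / (2 * (π:ℂ))) * ∫ θ in (0:ℝ)..(2*π), Complex.exp ((θ:ℂ) * Complex.I) * s θ := by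
    have hint : ∫ θ in (0:ℝ)..(2*π), Complex.exp ((θ:ℂ) * Complex.I) * s θ
        = (1/2 : ℂ) * ((∫ θ in (0:ℝ)..(2*π), ((2 * Real.cos θ : ℝ) : ℂ) * s θ)
          + Complex.I * ∫ θ in (0:ℝ)..(2*π), ((2 * Real.sin θ : ℝ) : ℂ) * s θ) := by
      rw [← intervalIntegral.integral_const_mul Complex.I]
      rw [← intervalIntegral.integral_add hf1int (hf2int.const_mul Complex.I)]
      rw [← intervalIntegral.integral_const_mul ((1:ℂ)/2)]
      refine intervalIntegral.integral_congr fun θ _ => ?_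
      rw [heexp θ]
      push_cast
      ring
    simp only [wderivZbar]
    rw [hfd]
    simp only [ContinuousLinearMap.coe_smul', Pi.smul_apply, smul_eq_mul]
    rw [hL1, hLI, hint]
    ring
  -- final estimate
  rw [hwz, hwzbar, norm_mul, norm_mul]
  have habsr : ‖1 / (2 * (π:ℂ))‖ = 1 / (2*π) := by
    rw [norm_div, norm_one, norm_mul, Complex.norm_two, Complex.norm_real, Real.norm_eq_abs,
      abs_of_nonneg pi_pos.le]
  rw [habsr]
  set A := ∫ θ in (0:ℝ)..(2*π), c θ * s θ with hAdef
  set B := ∫ θ in (0:ℝ)..(2*π), Complex.exp ((θ:ℂ) * Complex.I) * s θ with hBdef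
  have hmain : ‖A‖ + ‖B‖ ≤ 8 := by
    set α : ℂ := if A = 0 then 1 else ((‖A‖ : ℝ) : ℂ) / A with hαdef
    set β : ℂ := if B = 0 then 1 else ((‖B‖ : ℝ) : ℂ) / B with hβdef
    have hαA : α * A = ((‖A‖ : ℝ) : ℂ) := by
      by_cases h : A = 0
      · rw [hαdef, if_pos h, h]; simp
      · rw [hαdef, if_neg h, div_mul_cancel₀ _ h]
    have hβB : β * B = ((‖B‖ : ℝ) : ℂ) := by
      by_cases h : B = 0
      · rw [hβdef, if_pos h, h]; simp
      · rw [hβdef, if_neg h, div_mul_cancel₀ _ h]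
    have hαabs : ‖α‖ = 1 := by
      by_cases h : A = 0
      · rw [hαdef, if_pos h]; simp
      · rw [hαdef, if_neg h, norm_div, Complex.norm_real, Real.norm_eq_abs,
          abs_of_nonneg (norm_nonneg A)]
        exact div_self (norm_ne_zero_iff.mpr h)
    have hβabs : ‖β‖ = 1 := by
      by_cases h : B = 0
      · rw [hβdef, if_pos h]; simp
      · rw [hβdef, if_neg h, norm_div, Complex.norm_real, Real.norm_eq_abs,
          abs_of_nonneg (norm_nonneg B)]
        exact div_self (norm_ne_zero_iff.mpr h)
    have hφcont : Continuous fun θ : ℝ => α * c θ + β * Complex.exp ((θ:ℂ) * Complex.I) :=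
      (continuous_const.mul hccont).add (continuous_const.mul hecont)
    have hφbd : ∀ θ : ℝ,
        ‖α * c θ + β * Complex.exp ((θ:ℂ) * Complex.I)‖ ≤ 2 := by
      intro θ
      calc ‖α * c θ + β * Complex.exp ((θ:ℂ) * Complex.I)‖
          ≤ ‖α * c θ‖ + ‖β * Complex.exp ((θ:ℂ) * Complex.I)‖ :=
            norm_add_le _ _
        _ = 1 * 1 + 1 * 1 := by
            rw [norm_mul, norm_mul, hαabs, hβabs, habsc θ, Complex.norm_exp_ofReal_mul_I]
        _ = 2 := by norm_num
    have hiA : IntervalIntegrable (fun θ => α * (c θ * s θ)) volume 0 (2*π) := by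
      have h := hii (fun θ => α * c θ) (continuous_const.mul hccont)
        (fun θ => by rw [norm_mul, hαabs, habsc θ]; norm_num)
      simpa [mul_assoc] using h
    have hiB : IntervalIntegrable
        (fun θ => β * (Complex.exp ((θ:ℂ) * Complex.I) * s θ)) volume 0 (2*π) := by
      have h := hii (fun θ => β * Complex.exp ((θ:ℂ) * Complex.I))
        (continuous_const.mul hecont)
        (fun θ => by rw [norm_mul, hβabs, Complex.norm_exp_ofReal_mul_I]; norm_num)
      simpa [mul_assoc] using h
    have hintAB : α * A + β * B
        = ∫ θ in (0:ℝ)..(2*π),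
            (α * c θ + β * Complex.exp ((θ:ℂ) * Complex.I)) * s θ := by
      rw [hAdef, hBdef, ← intervalIntegral.integral_const_mul α,
        ← intervalIntegral.integral_const_mul β,
        ← intervalIntegral.integral_add hiA hiB]
      refine intervalIntegral.integral_congr fun θ _ => ?_
      ring
    have h1 : ‖A‖ + ‖B‖ = ‖α * A + β * B‖ := by
      rw [hαA, hβB, ← Complex.ofReal_add, Complex.norm_real, Real.norm_eq_abs,
        abs_of_nonneg (add_nonneg (norm_nonneg A) (norm_nonneg B))]
    rw [h1, hintAB]
    have h2 : ‖∫ θ in (0:ℝ)..(2*π),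
        (α * c θ + β * Complex.exp ((θ:ℂ) * Complex.I)) * s θ‖
        ≤ ∫ θ in (0:ℝ)..(2*π),
            ‖(α * c θ + β * Complex.exp ((θ:ℂ) * Complex.I)) * s θ‖ := by
        exact intervalIntegral.norm_integral_le_integral_norm (by positivity)
    have h3 : (∫ θ in (0:ℝ)..(2*π),
            ‖(α * c θ + β * Complex.exp ((θ:ℂ) * Complex.I)) * s θ‖)
        ≤ ∫ θ in (0:ℝ)..(2*π),
            ‖α * c θ + β * Complex.exp ((θ:ℂ) * Complex.I)‖ := by
      apply intervalIntegral.integral_mono_on (by positivity)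
        ((hii _ hφcont hφbd).norm)
        ((continuous_norm.comp hφcont).intervalIntegrable _ _)
      intro θ _
      rw [norm_mul]
      calc ‖α * c θ + β * Complex.exp ((θ:ℂ) * Complex.I)‖ * ‖s θ‖
          ≤ ‖α * c θ + β * Complex.exp ((θ:ℂ) * Complex.I)‖ * 1 :=
            mul_le_mul_of_nonneg_left (hsbd θ) (norm_nonneg _)
        _ = ‖α * c θ + β * Complex.exp ((θ:ℂ) * Complex.I)‖ := mul_one _
    have h4 : (∫ θ in (0:ℝ)..(2*π),
        ‖α * c θ + β * Complex.exp ((θ:ℂ) * Complex.I)‖) = 8 := by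
      rw [hcdef]
      exact integral_abs_combo α β hαabs hβabs
    linarith
  calc 1/(2*π) * ‖A‖ + 1/(2*π) * ‖B‖
      = 1/(2*π) * (‖A‖ + ‖B‖) := by ring
    _ ≤ 1/(2*π) * 8 := mul_le_mul_of_nonneg_left hmain (by positivity)
    _ = 4/π := by
        rw [div_mul_eq_mul_div, one_mul]
        rw [div_eq_div_iff (by positivity : (0:ℝ) < 2*π).ne' pi_pos.ne']
        ring
end

section
/- Let M > 0 and let u : 𝔻 → ℂ be given for all z ∈ 𝔻 by the absolutely convergent series u(z) = Σ_{k=0}^∞ c_k·(1 - ((k-1)/(k+1))·|z|²)·z^k + Σ_{k=1}^∞ c_{-k}·(1 - ((k-1)/(k+1))·|z|²)·z̄^k (the homogeneous expansion of a T₂-harmonic function), where the complex coefficients satisfy limsup_{|k|→∞} |c_k|^{1/|k|} ≤ 1. If sup_{z∈𝔻} |u(z)| ≤ M, then for every k ≥ 1, |c_k| + |c_{-k}| ≤ (2M/π)·(k+1). -/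
open Real MeasureTheory intervalIntegral

lemma absCosPi : ∫ θ in (0:ℝ)..Real.pi, |Real.cos θ| = 2 := by
  have h1 : ∫ θ in (0:ℝ)..(Real.pi/2), |Real.cos θ| = 1 := by
    rw [integral_congr (g := Real.cos)]
    · simp [integral_cos]
    · intro x hx
      rw [Set.uIcc_of_le (by positivity)] at hx
      exact abs_of_nonneg (Real.cos_nonneg_of_mem_Icc ⟨by linarith [hx.1, Real.pi_pos], hx.2⟩)
  have h2 : ∫ θ in (Real.pi/2)..Real.pi, |Real.cos θ| = 1 := by
    rw [integral_congr (g := fun x => -Real.cos x)]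
    · simp [integral_cos]
    · intro x hx
      rw [Set.uIcc_of_le (by linarith [Real.pi_pos])] at hx
      exact abs_of_nonpos (Real.cos_nonpos_of_pi_div_two_le_of_le hx.1 (by linarith [hx.2, Real.pi_pos]))
  have := integral_add_adjacent_intervals (a := (0:ℝ)) (b := Real.pi/2) (c := Real.pi)
    (μ := MeasureSpace.volume) (f := fun θ => |Real.cos θ|)
    (Real.continuous_cos.abs.intervalIntegrable _ _)
    (Real.continuous_cos.abs.intervalIntegrable _ _)
  rw [← this, h1, h2]; norm_num

lemma absCosInt (k : ℕ) (hk : 1 ≤ k) (b : ℝ) :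
    ∫ θ in (0:ℝ)..(2*Real.pi), |Real.cos ((k:ℝ)*θ + b)| = 4 := by
  have hkR : (k:ℝ) ≠ 0 := by positivity
  have hper : Function.Periodic (fun x => |Real.cos x|) Real.pi := by
    intro x; simp [Real.cos_pi_sub, Real.cos_add_pi, abs_neg]
  have hint : ∀ t₁ t₂ : ℝ, IntervalIntegrable (fun x => |Real.cos x|) MeasureSpace.volume t₁ t₂ :=
    fun t₁ t₂ => Real.continuous_cos.abs.intervalIntegrable _ _
  rw [integral_comp_mul_add (fun x => |Real.cos x|) hkR b]
  have e1 : (k:ℝ)*0 + b = b := by ring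
  have e2 : (k:ℝ)*(2*Real.pi) + b = b + (2*(k:ℤ)) • Real.pi := by push_cast [zsmul_eq_mul]; ring
  rw [e1, e2, hper.intervalIntegral_add_zsmul_eq (2*(k:ℤ)) b hint,
    hper.intervalIntegral_add_eq b 0]
  rw [zero_add, absCosPi]
  push_cast
  field_simp
  ring
  simp [hkR]

lemma swapIntegral (f : ℕ → ℝ → ℂ) (hf : ∀ n, Continuous (f n)) (C : ℕ → ℝ)
    (hC : Summable C) (hb : ∀ n θ, ‖f n θ‖ ≤ C n) :
    ∫ θ in (0:ℝ)..(2*Real.pi), ∑' n, f n θ = ∑' n, ∫ θ in (0:ℝ)..(2*Real.pi), f n θ := by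
  have h2π : (0:ℝ) ≤ 2*Real.pi := by positivity
  have hCn : ∀ n, 0 ≤ C n := fun n => le_trans (norm_nonneg _) (hb n 0)
  rw [intervalIntegral.integral_of_le h2π]
  have heq : ∀ n, (∫ θ in (0:ℝ)..(2*Real.pi), f n θ)
      = ∫ θ in Set.Ioc (0:ℝ) (2*Real.pi), f n θ := fun n =>
    intervalIntegral.integral_of_le h2π
  simp_rw [heq]
  apply MeasureTheory.integral_tsum (fun n => (hf n).aestronglyMeasurable)
  have hle : ∑' n, ∫⁻ θ in Set.Ioc (0:ℝ) (2*Real.pi), ‖f n θ‖₊ ∂volume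
      ≤ ∑' n, ENNReal.ofReal (C n) * ENNReal.ofReal (2*Real.pi) := by
    refine ENNReal.tsum_le_tsum fun n => ?_
    calc ∫⁻ θ in Set.Ioc (0:ℝ) (2*Real.pi), ‖f n θ‖₊ ∂volume
        ≤ ∫⁻ _ in Set.Ioc (0:ℝ) (2*Real.pi), ENNReal.ofReal (C n) ∂volume := by
          refine lintegral_mono fun θ => ?_
          rw [← enorm_eq_nnnorm, ← ofReal_norm]
          exact ENNReal.ofReal_le_ofReal (hb n θ)
      _ = ENNReal.ofReal (C n) * ENNReal.ofReal (2*Real.pi) := by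
          rw [MeasureTheory.lintegral_const, Measure.restrict_apply_univ, Real.volume_Ioc]
          norm_num
  refine ne_top_of_le_ne_top ?_ hle
  rw [ENNReal.tsum_mul_right, ← ENNReal.ofReal_tsum_of_nonneg hCn hC]
  exact ENNReal.mul_ne_top ENNReal.ofReal_ne_top ENNReal.ofReal_ne_top

lemma intTwoExp (C₁ C₂ : ℂ) (m₁ m₂ : ℤ) :
    (∫ θ in (0:ℝ)..(2*Real.pi),
      (C₁ * Complex.exp ((m₁:ℂ)*θ*Complex.I) + C₂ * Complex.exp ((m₂:ℂ)*θ*Complex.I)))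
    = C₁ * (if m₁ = 0 then ((2*Real.pi:ℝ):ℂ) else 0)
      + C₂ * (if m₂ = 0 then ((2*Real.pi:ℝ):ℂ) else 0) := by
  have hcont : ∀ m : ℤ, Continuous fun θ:ℝ => Complex.exp ((m:ℂ)*θ*Complex.I) := by
    intro m; fun_prop
  have Jint : ∀ m : ℤ, (∫ θ in (0:ℝ)..(2*Real.pi), Complex.exp ((m:ℂ)*θ*Complex.I))
      = if m = 0 then ((2*Real.pi:ℝ):ℂ) else 0 := by
    intro m
    by_cases hm : m = 0
    · simp [hm]
    · rw [if_neg hm]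
      have hc : ((m:ℂ)*Complex.I) ≠ 0 := by
        simp [Complex.ext_iff, Complex.I_ne_zero, hm]
      have : ∀ θ:ℝ, Complex.exp ((m:ℂ)*θ*Complex.I) = Complex.exp (((m:ℂ)*Complex.I)*θ) := by
        intro θ; ring_nf
      simp_rw [this]
      rw [integral_exp_mul_complex hc]
      have h1 : Complex.exp ((m:ℂ)*Complex.I*((2*Real.pi:ℝ):ℂ)) = 1 := by
        have h := Complex.exp_int_mul_two_pi_mul_I m
        rw [← h]; push_cast; ring_nf
      have h2 : Complex.exp ((m:ℂ)*Complex.I*((0:ℝ):ℂ)) = 1 := by simp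
      rw [h1, h2]
      simp
  rw [integral_add (f := fun θ:ℝ => C₁ * Complex.exp ((m₁:ℂ)*θ*Complex.I))
      (g := fun θ:ℝ => C₂ * Complex.exp ((m₂:ℂ)*θ*Complex.I))
      ((continuous_const.mul (hcont m₁)).intervalIntegrable _ _)
      ((continuous_const.mul (hcont m₂)).intervalIntegrable _ _),
    intervalIntegral.integral_const_mul, intervalIntegral.integral_const_mul, Jint, Jint]

lemma absW (k : ℕ) (s t : ℂ) (hs : ‖s‖ = 1) (ht : ‖t‖ = 1) (θ : ℝ) :
    ‖s * Complex.exp ((-(k:ℤ):ℂ)*θ*Complex.I) + t * Complex.exp (((k:ℤ):ℂ)*θ*Complex.I)‖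
      = 2 * |Real.cos ((k:ℝ)*θ + (t.arg - s.arg)/2)| := by
  set σ := s.arg with hσ
  set τ := t.arg with hτ
  have hs' : s = Complex.exp ((σ:ℂ)*Complex.I) := by
    rw [← Complex.norm_mul_exp_arg_mul_I s, hs]; simp [hσ]
  have ht' : t = Complex.exp ((τ:ℂ)*Complex.I) := by
    rw [← Complex.norm_mul_exp_arg_mul_I t, ht]; simp [hτ]
  have key : s * Complex.exp ((-(k:ℤ):ℂ)*θ*Complex.I) + t * Complex.exp (((k:ℤ):ℂ)*θ*Complex.I)
      = Complex.exp ((((σ+τ)/2 : ℝ):ℂ)*Complex.I)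
        * (2 * Complex.cos ((((σ-τ)/2 - (k:ℝ)*θ : ℝ)):ℂ)) := by
    rw [hs', ht', Complex.two_cos, ← Complex.exp_add, ← Complex.exp_add, mul_add,
      ← Complex.exp_add, ← Complex.exp_add]
    push_cast
    ring_nf
  rw [key, norm_mul, Complex.norm_exp_ofReal_mul_I, norm_mul, ← Complex.ofReal_cos,
    Complex.norm_real, Real.norm_eq_abs, one_mul]
  have : Real.cos ((σ-τ)/2 - (k:ℝ)*θ) = Real.cos ((k:ℝ)*θ + (τ - σ)/2) := by
    rw [← Real.cos_neg]; ring_nf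
  simp [this]

lemma absExpInt (m : ℤ) (θ : ℝ) : ‖Complex.exp ((m:ℂ)*θ*Complex.I)‖ = 1 := by
  rw [show ((m:ℂ)*θ*Complex.I) = (((m*θ:ℝ)):ℂ)*Complex.I by push_cast; ring]
  exact Complex.norm_exp_ofReal_mul_I _


lemma keyIneq (M : ℝ) (hM : 0 < M) (u : ℂ → ℂ) (c : ℤ → ℂ)
    (hsum1 : ∀ z : ℂ, ‖z‖ < 1 → Summable (fun k : ℕ =>
        ‖c (k:ℤ) *
          (((1 - (((k:ℝ) - 1) / ((k:ℝ) + 1)) * ‖z‖ ^ 2 : ℝ)) : ℂ) * z ^ k‖))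
    (hsum2 : ∀ z : ℂ, ‖z‖ < 1 → Summable (fun k : ℕ =>
        ‖c (-(k:ℤ) - 1) *
          (((1 - ((k:ℝ) / ((k:ℝ) + 2)) * ‖z‖ ^ 2 : ℝ)) : ℂ) *
            (starRingEnd ℂ z) ^ (k + 1)‖))
    (hu : ∀ z : ℂ, ‖z‖ < 1 →
      u z = (∑' k : ℕ, c (k:ℤ) *
              (((1 - (((k:ℝ) - 1) / ((k:ℝ) + 1)) * ‖z‖ ^ 2 : ℝ)) : ℂ) * z ^ k)
          + ∑' k : ℕ, c (-(k:ℤ) - 1) *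
              (((1 - ((k:ℝ) / ((k:ℝ) + 2)) * ‖z‖ ^ 2 : ℝ)) : ℂ) *
                (starRingEnd ℂ z) ^ (k + 1))
    (hbd : ∀ z : ℂ, ‖z‖ < 1 → ‖u z‖ ≤ M)
    (k : ℕ) (hk : 1 ≤ k) (s t : ℂ)
    (hs1 : ‖s‖ = 1) (ht1 : ‖t‖ = 1)
    (hs2 : s * c (k:ℤ) = (‖c (k:ℤ)‖ : ℂ))
    (ht2 : t * c (-(k:ℤ)) = (‖c (-(k:ℤ))‖ : ℂ))
    (r : ℝ) (hr0 : 0 < r) (hr1 : r < 1) :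
    Real.pi * ((1 - (((k:ℝ)-1)/((k:ℝ)+1))*r^2) * r^k)
        * (‖c (k:ℤ)‖ + ‖c (-(k:ℤ))‖) ≤ 4 * M := by
  have hπ := Real.pi_pos
  have habsr : ‖(r:ℂ)‖ = r := by
    rw [Complex.norm_real, Real.norm_eq_abs]; exact abs_of_pos hr0
  have hrlt : ‖(r:ℂ)‖ < 1 := by rw [habsr]; exact hr1
  have habsz : ∀ θ:ℝ, ‖(r:ℂ) * Complex.exp ((θ:ℂ)*Complex.I)‖ = r := by
    intro θ
    rw [norm_mul, habsr, Complex.norm_exp_ofReal_mul_I, mul_one]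
  have hzlt : ∀ θ:ℝ, ‖(r:ℂ) * Complex.exp ((θ:ℂ)*Complex.I)‖ < 1 := by
    intro θ; rw [habsz]; exact hr1
  -- the weight function
  set w : ℝ → ℂ := fun θ => s * Complex.exp ((-(k:ℤ):ℂ)*θ*Complex.I)
      + t * Complex.exp (((k:ℤ):ℂ)*θ*Complex.I) with hwdef
  have hwabs : ∀ θ, ‖w θ‖ = 2 * |Real.cos ((k:ℝ)*θ + (t.arg - s.arg)/2)| :=
    fun θ => absW k s t hs1 ht1 θ
  have hwb : ∀ θ, ‖w θ‖ ≤ 2 := by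
    intro θ
    rw [hwabs]
    have := Real.abs_cos_le_one ((k:ℝ)*θ + (t.arg - s.arg)/2)
    linarith
  have hwcont : Continuous w := by
    rw [hwdef]; fun_prop
  -- summability at radius r
  have H1 := hsum1 (r:ℂ) hrlt
  have H2 := hsum2 (r:ℂ) hrlt
  simp only [habsr] at H1 H2
  -- pointwise expansion of u(z)*w
  have Hu : ∀ θ:ℝ, u ((r:ℂ)*Complex.exp ((θ:ℂ)*Complex.I)) * w θ
      = ∑' n:ℕ, (c (n:ℤ) * (((1 - (((n:ℝ) - 1) / ((n:ℝ) + 1)) * r ^ 2 : ℝ)) : ℂ)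
            * ((r:ℂ)*Complex.exp ((θ:ℂ)*Complex.I))^n * w θ
          + c (-(n:ℤ)-1) * (((1 - ((n:ℝ) / ((n:ℝ) + 2)) * r ^ 2 : ℝ)) : ℂ)
            * ((starRingEnd ℂ) ((r:ℂ)*Complex.exp ((θ:ℂ)*Complex.I)))^(n+1) * w θ) := by
    intro θ
    have h1 := hsum1 _ (hzlt θ)
    have h2 := hsum2 _ (hzlt θ)
    simp only [habsz] at h1 h2
    have h1' : Summable (fun n:ℕ => c (n:ℤ) * (((1 - (((n:ℝ) - 1) / ((n:ℝ) + 1)) * r ^ 2 : ℝ)) : ℂ)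
        * ((r:ℂ)*Complex.exp ((θ:ℂ)*Complex.I))^n) := by
      apply Summable.of_norm
      exact h1
    have h2' : Summable (fun n:ℕ => c (-(n:ℤ)-1) * (((1 - ((n:ℝ) / ((n:ℝ) + 2)) * r ^ 2 : ℝ)) : ℂ)
        * ((starRingEnd ℂ) ((r:ℂ)*Complex.exp ((θ:ℂ)*Complex.I)))^(n+1)) := by
      apply Summable.of_norm
      exact h2
    rw [hu _ (hzlt θ)]
    simp only [habsz]
    rw [add_mul, ← tsum_mul_right, ← tsum_mul_right,
      ← Summable.tsum_add (h1'.mul_right (w θ)) (h2'.mul_right (w θ))]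
  -- swap integral and sum
  have hswap : (∫ θ in (0:ℝ)..(2*Real.pi), u ((r:ℂ)*Complex.exp ((θ:ℂ)*Complex.I)) * w θ)
      = ∑' n:ℕ, ∫ θ in (0:ℝ)..(2*Real.pi),
          (c (n:ℤ) * (((1 - (((n:ℝ) - 1) / ((n:ℝ) + 1)) * r ^ 2 : ℝ)) : ℂ)
            * ((r:ℂ)*Complex.exp ((θ:ℂ)*Complex.I))^n * w θ
          + c (-(n:ℤ)-1) * (((1 - ((n:ℝ) / ((n:ℝ) + 2)) * r ^ 2 : ℝ)) : ℂ)
            * ((starRingEnd ℂ) ((r:ℂ)*Complex.exp ((θ:ℂ)*Complex.I)))^(n+1) * w θ) := by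
    rw [intervalIntegral.integral_congr (fun θ _ => Hu θ)]
    have hzc : Continuous fun θ:ℝ => (r:ℂ) * Complex.exp ((θ:ℂ)*Complex.I) := by fun_prop
    refine swapIntegral _ (fun n =>
      ((continuous_const.mul (hzc.pow n)).mul hwcont).add
        ((continuous_const.mul ((Complex.continuous_conj.comp hzc).pow (n+1))).mul hwcont))
      (fun n => ‖c (n:ℤ) * (((1 - (((n:ℝ) - 1) / ((n:ℝ) + 1)) * r ^ 2 : ℝ)) : ℂ)
          * (r:ℂ)^n‖ * 2
        + ‖c (-(n:ℤ)-1) * (((1 - ((n:ℝ) / ((n:ℝ) + 2)) * r ^ 2 : ℝ)) : ℂ)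
          * ((starRingEnd ℂ) ((r:ℂ)))^(n+1)‖ * 2)
      ((H1.mul_right 2).add (H2.mul_right 2)) ?_
    intro n θ
    refine le_trans (norm_add_le _ _) (add_le_add ?_ ?_)
    · have e1 : ‖c (n:ℤ) * (((1 - (((n:ℝ) - 1) / ((n:ℝ) + 1)) * r ^ 2 : ℝ)) : ℂ)
          * ((r:ℂ)*Complex.exp ((θ:ℂ)*Complex.I))^n * w θ‖
          = ‖c (n:ℤ) * (((1 - (((n:ℝ) - 1) / ((n:ℝ) + 1)) * r ^ 2 : ℝ)) : ℂ)
            * (r:ℂ)^n‖ * ‖w θ‖ := by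
        simp only [norm_mul, norm_pow, Complex.norm_exp_ofReal_mul_I, mul_one]
      rw [e1]
      exact mul_le_mul_of_nonneg_left (hwb θ) (norm_nonneg _)
    · have e2 : ‖c (-(n:ℤ)-1) * (((1 - ((n:ℝ) / ((n:ℝ) + 2)) * r ^ 2 : ℝ)) : ℂ)
          * ((starRingEnd ℂ) ((r:ℂ)*Complex.exp ((θ:ℂ)*Complex.I)))^(n+1) * w θ‖
          = ‖c (-(n:ℤ)-1) * (((1 - ((n:ℝ) / ((n:ℝ) + 2)) * r ^ 2 : ℝ)) : ℂ)
            * ((starRingEnd ℂ) ((r:ℂ)))^(n+1)‖ * ‖w θ‖ := by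
        simp only [norm_mul, norm_pow, Complex.norm_conj, Complex.norm_exp_ofReal_mul_I, mul_one]
      rw [e2]
      exact mul_le_mul_of_nonneg_left (hwb θ) (norm_nonneg _)
  -- value of each term integral
  have hval : ∀ n:ℕ, (∫ θ in (0:ℝ)..(2*Real.pi),
        (c (n:ℤ) * (((1 - (((n:ℝ) - 1) / ((n:ℝ) + 1)) * r ^ 2 : ℝ)) : ℂ)
          * ((r:ℂ)*Complex.exp ((θ:ℂ)*Complex.I))^n * w θ
        + c (-(n:ℤ)-1) * (((1 - ((n:ℝ) / ((n:ℝ) + 2)) * r ^ 2 : ℝ)) : ℂ)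
          * ((starRingEnd ℂ) ((r:ℂ)*Complex.exp ((θ:ℂ)*Complex.I)))^(n+1) * w θ))
      = (if n = k then (c (n:ℤ) * (((1 - (((n:ℝ) - 1) / ((n:ℝ) + 1)) * r ^ 2 : ℝ)) : ℂ)
            * (r:ℂ)^n * s * ((2*Real.pi:ℝ):ℂ)) else 0)
        + (if n + 1 = k then (c (-(n:ℤ)-1) * (((1 - ((n:ℝ) / ((n:ℝ) + 2)) * r ^ 2 : ℝ)) : ℂ)
            * (r:ℂ)^(n+1) * t * ((2*Real.pi:ℝ):ℂ)) else 0) := by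
    intro n
    have hpt : ∀ θ:ℝ,
        (c (n:ℤ) * (((1 - (((n:ℝ) - 1) / ((n:ℝ) + 1)) * r ^ 2 : ℝ)) : ℂ)
          * ((r:ℂ)*Complex.exp ((θ:ℂ)*Complex.I))^n * w θ
        + c (-(n:ℤ)-1) * (((1 - ((n:ℝ) / ((n:ℝ) + 2)) * r ^ 2 : ℝ)) : ℂ)
          * ((starRingEnd ℂ) ((r:ℂ)*Complex.exp ((θ:ℂ)*Complex.I)))^(n+1) * w θ)
        = ((c (n:ℤ) * (((1 - (((n:ℝ) - 1) / ((n:ℝ) + 1)) * r ^ 2 : ℝ)) : ℂ) * (r:ℂ)^n * s)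
              * Complex.exp (((((n:ℤ)-(k:ℤ)):ℤ):ℂ)*θ*Complex.I)
            + (c (n:ℤ) * (((1 - (((n:ℝ) - 1) / ((n:ℝ) + 1)) * r ^ 2 : ℝ)) : ℂ) * (r:ℂ)^n * t)
              * Complex.exp (((((n:ℤ)+(k:ℤ)):ℤ):ℂ)*θ*Complex.I))
          + ((c (-(n:ℤ)-1) * (((1 - ((n:ℝ) / ((n:ℝ) + 2)) * r ^ 2 : ℝ)) : ℂ) * (r:ℂ)^(n+1) * s)
              * Complex.exp ((((-(n:ℤ)-1-(k:ℤ)):ℤ):ℂ)*θ*Complex.I)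
            + (c (-(n:ℤ)-1) * (((1 - ((n:ℝ) / ((n:ℝ) + 2)) * r ^ 2 : ℝ)) : ℂ) * (r:ℂ)^(n+1) * t)
              * Complex.exp (((((k:ℤ)-(n:ℤ)-1):ℤ):ℂ)*θ*Complex.I)) := by
      intro θ
      rw [hwdef]
      have hA : ∀ (a : ℂ),
          a * ((r:ℂ) * Complex.exp ((θ:ℂ)*Complex.I))^n *
            (s * Complex.exp ((-(k:ℤ):ℂ)*θ*Complex.I) + t * Complex.exp (((k:ℤ):ℂ)*θ*Complex.I))
          = (a * (r:ℂ)^n * s) * Complex.exp (((((n:ℤ)-(k:ℤ)):ℤ):ℂ)*θ*Complex.I)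
            + (a * (r:ℂ)^n * t) * Complex.exp (((((n:ℤ)+(k:ℤ)):ℤ):ℂ)*θ*Complex.I) := by
        intro a
        push_cast
        rw [mul_pow, ← Complex.exp_nat_mul,
          show ((n:ℂ)-(k:ℂ))*θ*Complex.I = (n:ℂ)*((θ:ℂ)*Complex.I) + -(k:ℂ)*θ*Complex.I by ring,
          show ((n:ℂ)+(k:ℂ))*θ*Complex.I = (n:ℂ)*((θ:ℂ)*Complex.I) + (k:ℂ)*θ*Complex.I by ring,
          Complex.exp_add, Complex.exp_add]
        ring
      have hB : ∀ (a : ℂ),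
          a * ((starRingEnd ℂ) ((r:ℂ) * Complex.exp ((θ:ℂ)*Complex.I)))^(n+1) *
            (s * Complex.exp ((-(k:ℤ):ℂ)*θ*Complex.I) + t * Complex.exp (((k:ℤ):ℂ)*θ*Complex.I))
          = (a * (r:ℂ)^(n+1) * s) * Complex.exp ((((-(n:ℤ)-1-(k:ℤ)):ℤ):ℂ)*θ*Complex.I)
            + (a * (r:ℂ)^(n+1) * t) * Complex.exp (((((k:ℤ)-(n:ℤ)-1):ℤ):ℂ)*θ*Complex.I) := by
        intro a
        have hc : (starRingEnd ℂ) ((r:ℂ) * Complex.exp ((θ:ℂ)*Complex.I))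
            = (r:ℂ) * Complex.exp (-((θ:ℂ)*Complex.I)) := by
          rw [map_mul, Complex.conj_ofReal, ← Complex.exp_conj]
          congr 1
          simp [Complex.ext_iff]
        rw [hc]
        push_cast
        rw [mul_pow, ← Complex.exp_nat_mul,
          show (-(n:ℂ)-1-(k:ℂ))*θ*Complex.I
            = ((n:ℂ)+1)*(-((θ:ℂ)*Complex.I)) + -(k:ℂ)*θ*Complex.I by ring,
          show ((k:ℂ)-(n:ℂ)-1)*θ*Complex.I
            = ((n:ℂ)+1)*(-((θ:ℂ)*Complex.I)) + (k:ℂ)*θ*Complex.I by ring,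
          Complex.exp_add, Complex.exp_add]
        push_cast
        ring_nf
      rw [hA, hB]
    rw [intervalIntegral.integral_congr (fun θ _ => hpt θ)]
    have hie : ∀ (m : ℤ) (a : ℂ), IntervalIntegrable
        (fun θ:ℝ => a * Complex.exp ((m:ℂ)*θ*Complex.I)) MeasureSpace.volume 0 (2*Real.pi) := by
      intro m a
      apply Continuous.intervalIntegrable
      fun_prop
    rw [intervalIntegral.integral_add ((hie _ _).add (hie _ _)) ((hie _ _).add (hie _ _)),
      intTwoExp, intTwoExp]
    have c2 : ¬((n:ℤ)+(k:ℤ) = 0) := by omega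
    have c3 : ¬(-(n:ℤ)-1-(k:ℤ) = 0) := by omega
    rw [if_neg c2, if_neg c3, mul_zero, add_zero, mul_zero, zero_add]
    congr 1
    · rcases eq_or_ne n k with h | h
      · subst h
        rw [if_pos (by omega), if_pos rfl]
      · rw [if_neg (by omega), if_neg h, mul_zero]
    · rcases eq_or_ne (n+1) k with h | h
      · rw [if_pos (by omega), if_pos h]
      · rw [if_neg (by omega), if_neg h, mul_zero]
  -- sum up the term values
  have hS1 : Summable (fun n:ℕ =>
      (if n = k then (c (n:ℤ) * (((1 - (((n:ℝ) - 1) / ((n:ℝ) + 1)) * r ^ 2 : ℝ)) : ℂ)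
          * (r:ℂ)^n * s * ((2*Real.pi:ℝ):ℂ)) else 0)) :=
    summable_of_ne_finset_zero (s := {k}) (fun n hn => if_neg (by simpa using hn))
  have hS2 : Summable (fun n:ℕ =>
      (if n + 1 = k then (c (-(n:ℤ)-1) * (((1 - ((n:ℝ) / ((n:ℝ) + 2)) * r ^ 2 : ℝ)) : ℂ)
          * (r:ℂ)^(n+1) * t * ((2*Real.pi:ℝ):ℂ)) else 0)) :=
    summable_of_ne_finset_zero (s := {k-1}) (fun n hn => if_neg (by
      simp only [Finset.mem_singleton] at hn; omega))
  have hsumval : (∫ θ in (0:ℝ)..(2*Real.pi), u ((r:ℂ)*Complex.exp ((θ:ℂ)*Complex.I)) * w θ)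
      = c (k:ℤ) * (((1 - (((k:ℝ) - 1) / ((k:ℝ) + 1)) * r ^ 2 : ℝ)) : ℂ)
          * (r:ℂ)^k * s * ((2*Real.pi:ℝ):ℂ)
        + c (-(((k-1:ℕ)):ℤ)-1) * (((1 - (((k-1:ℕ):ℝ) / (((k-1:ℕ):ℝ) + 2)) * r ^ 2 : ℝ)) : ℂ)
          * (r:ℂ)^((k-1)+1) * t * ((2*Real.pi:ℝ):ℂ) := by
    rw [hswap, tsum_congr hval, Summable.tsum_add hS1 hS2,
      tsum_eq_single k (fun n hn => if_neg hn), if_pos rfl,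
      tsum_eq_single (k-1) (fun n hn => if_neg (by omega)), if_pos (by omega)]
  -- identify the value as a real number
  have hkm : ((k-1:ℕ):ℝ) = (k:ℝ) - 1 := by
    have := Nat.cast_sub (R := ℝ) hk
    simpa using this
  have hidx : (-(((k-1:ℕ)):ℤ) - 1) = -(k:ℤ) := by omega
  have hp : (k-1) + 1 = k := Nat.sub_add_cancel hk
  have hreal : c (k:ℤ) * (((1 - (((k:ℝ) - 1) / ((k:ℝ) + 1)) * r ^ 2 : ℝ)) : ℂ)
          * (r:ℂ)^k * s * ((2*Real.pi:ℝ):ℂ)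
        + c (-(((k-1:ℕ)):ℤ)-1) * (((1 - (((k-1:ℕ):ℝ) / (((k-1:ℕ):ℝ) + 2)) * r ^ 2 : ℝ)) : ℂ)
          * (r:ℂ)^((k-1)+1) * t * ((2*Real.pi:ℝ):ℂ)
      = (((‖c (k:ℤ)‖ + ‖c (-(k:ℤ))‖)
          * ((1 - (((k:ℝ)-1)/((k:ℝ)+1))*r^2) * r^k * (2*Real.pi)) : ℝ) : ℂ) := by
    rw [hidx, hp, hkm, show ((k:ℝ)-1)+2 = (k:ℝ)+1 by ring]
    calc c (k:ℤ) * (((1 - (((k:ℝ) - 1) / ((k:ℝ) + 1)) * r ^ 2 : ℝ)) : ℂ)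
          * (r:ℂ)^k * s * ((2*Real.pi:ℝ):ℂ)
        + c (-(k:ℤ)) * (((1 - (((k:ℝ) - 1) / ((k:ℝ) + 1)) * r ^ 2 : ℝ)) : ℂ)
          * (r:ℂ)^k * t * ((2*Real.pi:ℝ):ℂ)
        = (s * c (k:ℤ) + t * c (-(k:ℤ)))
            * ((((1 - (((k:ℝ) - 1) / ((k:ℝ) + 1)) * r ^ 2 : ℝ)) : ℂ)
              * (r:ℂ)^k * ((2*Real.pi:ℝ):ℂ)) := by ring
      _ = _ := by
        rw [hs2, ht2]
        push_cast
        ring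
  -- positivity facts
  have hk1 : (1:ℝ) ≤ (k:ℝ) := by exact_mod_cast hk
  have hA0 : 0 < 1 - (((k:ℝ)-1)/((k:ℝ)+1))*r^2 := by
    have hq : ((k:ℝ)-1)/((k:ℝ)+1) < 1 := by
      rw [div_lt_one (by positivity)]; linarith
    have hqn : 0 ≤ ((k:ℝ)-1)/((k:ℝ)+1) :=
      div_nonneg (by linarith) (by positivity)
    nlinarith [sq_nonneg r]
  have hX0 : 0 ≤ ‖c (k:ℤ)‖ + ‖c (-(k:ℤ))‖ :=
    add_nonneg (norm_nonneg _) (norm_nonneg _)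
  have habsInt : ‖∫ θ in (0:ℝ)..(2*Real.pi),
        u ((r:ℂ)*Complex.exp ((θ:ℂ)*Complex.I)) * w θ‖
      = (‖c (k:ℤ)‖ + ‖c (-(k:ℤ))‖)
          * ((1 - (((k:ℝ)-1)/((k:ℝ)+1))*r^2) * r^k * (2*Real.pi)) := by
    rw [hsumval, hreal, Complex.norm_real, Real.norm_eq_abs, abs_of_nonneg]
    have : 0 ≤ (1 - (((k:ℝ)-1)/((k:ℝ)+1))*r^2) * r^k * (2*Real.pi) := by positivity
    exact mul_nonneg hX0 this
  -- the upper bound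
  have hbound : ‖∫ θ in (0:ℝ)..(2*Real.pi),
        u ((r:ℂ)*Complex.exp ((θ:ℂ)*Complex.I)) * w θ‖ ≤ 8 * M := by
    have hptb : ∀ θ:ℝ, ‖u ((r:ℂ)*Complex.exp ((θ:ℂ)*Complex.I)) * w θ‖
        ≤ M * (2 * |Real.cos ((k:ℝ)*θ + (t.arg - s.arg)/2)|) := by
      intro θ
      rw [norm_mul, ← hwabs θ]
      exact mul_le_mul_of_nonneg_right (hbd _ (hzlt θ)) (norm_nonneg _)
    have hgi : IntervalIntegrable
        (fun θ:ℝ => M * (2 * |Real.cos ((k:ℝ)*θ + (t.arg - s.arg)/2)|))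
        MeasureSpace.volume 0 (2*Real.pi) := by
      apply Continuous.intervalIntegrable
      fun_prop
    refine le_trans (intervalIntegral.norm_integral_le_of_norm_le Real.two_pi_pos.le
      (Filter.Eventually.of_forall (fun θ _ => hptb θ)) hgi) ?_
    rw [intervalIntegral.integral_const_mul, intervalIntegral.integral_const_mul, absCosInt k hk]
    linarith
  rw [habsInt] at hbound
  nlinarith [hbound]



/-- Coefficient estimates for bounded `T₂`-harmonic functions: `|c_k| + |c_{-k}| ≤ (2M/π)(k+1)`. -/
theorem stmt7 (M : ℝ) (hM : 0 < M) (u : ℂ → ℂ) (c : ℤ → ℂ)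
    (hlim : Filter.limsup
        (fun k : ℤ => ‖c k‖ ^ ((1:ℝ) / (k.natAbs : ℝ))) Filter.cofinite ≤ 1)
    (hsum1 : ∀ z : ℂ, ‖z‖ < 1 → Summable (fun k : ℕ =>
        ‖c (k:ℤ) *
          (((1 - (((k:ℝ) - 1) / ((k:ℝ) + 1)) * ‖z‖ ^ 2 : ℝ)) : ℂ) * z ^ k‖))
    (hsum2 : ∀ z : ℂ, ‖z‖ < 1 → Summable (fun k : ℕ =>
        ‖c (-(k:ℤ) - 1) *
          (((1 - ((k:ℝ) / ((k:ℝ) + 2)) * ‖z‖ ^ 2 : ℝ)) : ℂ) *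
            (starRingEnd ℂ z) ^ (k + 1)‖))
    (hu : ∀ z : ℂ, ‖z‖ < 1 →
      u z = (∑' k : ℕ, c (k:ℤ) *
              (((1 - (((k:ℝ) - 1) / ((k:ℝ) + 1)) * ‖z‖ ^ 2 : ℝ)) : ℂ) * z ^ k)
          + ∑' k : ℕ, c (-(k:ℤ) - 1) *
              (((1 - ((k:ℝ) / ((k:ℝ) + 2)) * ‖z‖ ^ 2 : ℝ)) : ℂ) *
                (starRingEnd ℂ z) ^ (k + 1))
    (hbd : ∀ z : ℂ, ‖z‖ < 1 → ‖u z‖ ≤ M)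
    (k : ℕ) (hk : 1 ≤ k) :
    ‖c (k:ℤ)‖ + ‖c (-(k:ℤ))‖
      ≤ (2 * M / Real.pi) * ((k:ℝ) + 1) := by
  have phase : ∀ a : ℂ, ∃ s : ℂ, ‖s‖ = 1 ∧ s * a = (‖a‖ : ℂ) := by
    intro a
    by_cases ha : a = 0
    · exact ⟨1, by simp, by simp [ha]⟩
    · refine ⟨(starRingEnd ℂ) a / (‖a‖ : ℂ), ?_, ?_⟩
      · rw [norm_div, Complex.norm_conj, Complex.norm_real, Real.norm_eq_abs,
          abs_of_nonneg (norm_nonneg a), div_self ((norm_ne_zero_iff.mpr ha))]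
      · rw [div_mul_eq_mul_div, mul_comm, Complex.mul_conj, Complex.normSq_eq_norm_sq]
        rw [div_eq_iff (by
          simpa [Complex.ofReal_ne_zero] using (norm_ne_zero_iff.mpr ha))]
        push_cast
        ring
  obtain ⟨s, hs1, hs2⟩ := phase (c (k:ℤ))
  obtain ⟨t, ht1, ht2⟩ := phase (c (-(k:ℤ)))
  have key := fun (r:ℝ) (hr : r ∈ Set.Ioo (0:ℝ) 1) =>
    keyIneq M hM u c hsum1 hsum2 hu hbd k hk s t hs1 ht1 hs2 ht2 r hr.1 hr.2
  have hπ := Real.pi_pos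
  have hcont : Continuous fun r:ℝ => Real.pi * ((1 - (((k:ℝ)-1)/((k:ℝ)+1))*r^2) * r^k)
      * (‖c (k:ℤ)‖ + ‖c (-(k:ℤ))‖) := by fun_prop
  have hfin : Real.pi * ((1 - (((k:ℝ)-1)/((k:ℝ)+1))*(1:ℝ)^2) * (1:ℝ)^k)
      * (‖c (k:ℤ)‖ + ‖c (-(k:ℤ))‖) ≤ 4 * M := by
    refine le_of_tendsto ((hcont.tendsto 1).mono_left
      (nhdsWithin_le_nhds (s := Set.Iio (1:ℝ)))) ?_
    filter_upwards [Ioo_mem_nhdsLT_of_mem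
      (Set.mem_Ioc.mpr ⟨zero_lt_one, le_refl (1:ℝ)⟩)] with r hr
    exact key r hr
  have hk1 : (1:ℝ) ≤ (k:ℝ) := by exact_mod_cast hk
  have hfrac : 1 - (((k:ℝ)-1)/((k:ℝ)+1)) = 2/((k:ℝ)+1) := by
    field_simp
    norm_num
  rw [one_pow, one_pow, mul_one, mul_one, hfrac] at hfin
  have hkp : (0:ℝ) < (k:ℝ)+1 := by positivity
  have h2 : Real.pi * 2 * (‖c (k:ℤ)‖ + ‖c (-(k:ℤ))‖)
      ≤ 4 * M * ((k:ℝ)+1) := by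
    have h3 := mul_le_mul_of_nonneg_right hfin hkp.le
    calc Real.pi * 2 * (‖c (k:ℤ)‖ + ‖c (-(k:ℤ))‖)
        = Real.pi * (2/((k:ℝ)+1))
            * (‖c (k:ℤ)‖ + ‖c (-(k:ℤ))‖) * ((k:ℝ)+1) := by
          field_simp
      _ ≤ 4 * M * ((k:ℝ)+1) := h3
  rw [div_mul_eq_mul_div, le_div_iff₀ hπ]
  linarith
end
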